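/- arXiv:1107.5552 — 4 statements merged into one kernel-verified Lean document; each statement's English description precedes it below -/
import Mathlib

section
/- Let G=(V,D,B) be an acyclic mixed graph with mixed components G_1,…,G_k. If G is HTC-identifiable, then every mixed component G_j is HTC-identifiable. Furthermore, G is HTC-infinite-to-one if and only if some mixed component G_j is HTC-infinite-to-one. -/
open scoped Classical Matrix

/-- A mixed graph `G = (V, D, B)`: a finite vertex set `V`, a set `D` of directed
edges, and a symmetric set `B` of bidirected edges; no self-loops. -/
structure MixedGraph (V : Type*) [Fintype V] [DecidableEq V] where
  D : Finset (V × V)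
  B : Finset (V × V)
  B_symm : ∀ v w : V, (v, w) ∈ B → (w, v) ∈ B
  D_irrefl : ∀ v : V, (v, v) ∉ D
  B_irrefl : ∀ v : V, (v, v) ∉ B

namespace MixedGraph

variable {V : Type*} [Fintype V] [DecidableEq V]

/-- The parents of `v`: nodes `w` with `w → v ∈ D`. -/
def pa (G : MixedGraph V) (v : V) : Finset V :=
  Finset.univ.filter fun w => (w, v) ∈ G.D

/-- The siblings of `v`: nodes `w` with `w ↔ v ∈ B`. -/
def sib (G : MixedGraph V) (v : V) : Finset V :=
  Finset.univ.filter fun w => (w, v) ∈ G.B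

/-- A trek: a walk with no colliding arrowheads.  The field `left` lists the nodes of the
left-hand side from top (head) to source (last); `right` lists the nodes of the right-hand
side from top (head) to target (last); consecutive nodes in each list are joined by directed
edges pointing away from the head.  If `hasBidir` then the two heads are joined by a
bidirected edge, otherwise they coincide (the top node). -/
structure Trek (G : MixedGraph V) where
  left : List V
  right : List V
  left_ne : left ≠ []
  right_ne : right ≠ []
  hasBidir : Bool
  left_chain : left.Chain' fun a b => (a, b) ∈ G.D
  right_chain : right.Chain' fun a b => (a, b) ∈ G.D
  head_cond : if hasBidir then (left.head left_ne, right.head right_ne) ∈ G.B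
              else left.head left_ne = right.head right_ne

namespace Trek

variable {G : MixedGraph V}

/-- The source of a trek. -/
def source (π : G.Trek) : V := π.left.getLast π.left_ne

/-- The target of a trek. -/
def target (π : G.Trek) : V := π.right.getLast π.right_ne

/-- The left-hand side `Left(π)` of a trek, as a set of nodes. -/
def leftSet (π : G.Trek) : Finset V := π.left.toFinset

/-- The right-hand side `Right(π)` of a trek, as a set of nodes. -/
def rightSet (π : G.Trek) : Finset V := π.right.toFinset

/-- A half-trek is a trek whose left-hand side consists of exactly one node. -/
def IsHalfTrek (π : G.Trek) : Prop := π.leftSet.card = 1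

/-- The number of directed edges traversed by the trek. -/
def nEdges (π : G.Trek) : ℕ := (π.left.length - 1) + (π.right.length - 1)

end Trek

/-- `htr v`: the set of nodes `w ∉ {v} ∪ sib(v)` reachable from `v` by a half-trek
containing at least one directed edge. -/
def htr (G : MixedGraph V) (v : V) : Set V :=
  {w | w ≠ v ∧ w ∉ G.sib v ∧
    ∃ π : G.Trek, π.source = v ∧ π.target = w ∧ π.IsHalfTrek ∧ 1 ≤ π.nEdges}

/-- `f` encodes a system of treks from `Y` to `P`: treks with pairwise distinct sources
forming `Y` and pairwise distinct targets forming `P`. -/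
def IsTrekSystem (G : MixedGraph V) (Y P : Finset V) (f : V → G.Trek) : Prop :=
  (∀ y ∈ Y, (f y).source = y) ∧
  (Y.image fun y => (f y).target) = P ∧
  ∀ y ∈ Y, ∀ y' ∈ Y, y ≠ y' → (f y).target ≠ (f y').target

/-- The treks `f y`, `y ∈ Y`, have no sided intersection. -/
def NoSidedIntersection (G : MixedGraph V) (Y : Finset V) (f : V → G.Trek) : Prop :=
  ∀ y ∈ Y, ∀ y' ∈ Y, y ≠ y' →
    Disjoint (f y).leftSet (f y').leftSet ∧ Disjoint (f y).rightSet (f y').rightSet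

/-- `Y` satisfies the half-trek criterion with respect to `v`. -/
def SatisfiesHTC (G : MixedGraph V) (v : V) (Y : Finset V) : Prop :=
  Y.card = (G.pa v).card ∧
  (∀ y ∈ Y, y ≠ v ∧ y ∉ G.sib v) ∧
  ∃ f : V → G.Trek, (∀ y ∈ Y, (f y).IsHalfTrek) ∧
    G.IsTrekSystem Y (G.pa v) f ∧ G.NoSidedIntersection Y f

/-- `Y` satisfies the weak half-trek criterion with respect to `v`. -/
def SatisfiesWeakHTC (G : MixedGraph V) (v : V) (Y : Finset V) : Prop :=
  Y.card = (G.pa v).card ∧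
  (∀ y ∈ Y, y ≠ v ∧ y ∉ G.sib v) ∧
  ∃ f : V → G.Trek, (∀ y ∈ Y, y ∈ G.htr v → (f y).IsHalfTrek) ∧
    G.IsTrekSystem Y (G.pa v) f ∧ G.NoSidedIntersection Y f

/-- `G` is HTC-identifiable. -/
def HTCIdentifiable (G : MixedGraph V) : Prop :=
  ∃ Y : V → Finset V,
    (∀ v, G.SatisfiesHTC v (Y v)) ∧
    ∃ r : V → V → Prop, IsStrictTotalOrder V r ∧
      ∀ v w, w ∈ Y v → w ∈ G.htr v → r w v

/-- `G` is HTC-infinite-to-one. -/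
def HTCInfiniteToOne (G : MixedGraph V) : Prop :=
  ∀ Y : V → Finset V,
    (∃ v, ¬ G.SatisfiesHTC v (Y v)) ∨ ∃ v w, v ∈ Y w ∧ w ∈ Y v

/-- `G` is acyclic: no directed cycle can be formed from the edges in `D`. -/
def Acyclic (G : MixedGraph V) : Prop :=
  ∀ v : V, ¬ Relation.TransGen (fun a b => (a, b) ∈ G.D) v v

/-- `G` is simple: at most one edge between any pair of nodes. -/
def Simple (G : MixedGraph V) : Prop :=
  (∀ e ∈ G.D, e ∉ G.B) ∧ ∀ v w : V, (v, w) ∈ G.D → (w, v) ∉ G.D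

/-- `ℝ^D_reg`: real matrices supported on `D` with `I - Λ` invertible. -/
def RDreg (G : MixedGraph V) : Set (Matrix V V ℝ) :=
  {Λ | (∀ v w, (v, w) ∉ G.D → Λ v w = 0) ∧ IsUnit (1 - Λ).det}

/-- `PD(B)`: positive definite symmetric matrices supported on the diagonal and `B`. -/
def PDB (G : MixedGraph V) : Set (Matrix V V ℝ) :=
  {Ω | Ω.PosDef ∧ ∀ v w, v ≠ w → (v, w) ∉ G.B → Ω v w = 0}

/-- The parameter space `Θ = ℝ^D_reg × PD(B)`. -/
def Theta (G : MixedGraph V) : Set (Matrix V V ℝ × Matrix V V ℝ) :=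
  {θ | θ.1 ∈ G.RDreg ∧ θ.2 ∈ G.PDB}

/-- The parametrization `φ(Λ, Ω) = (I-Λ)^{-T} Ω (I-Λ)^{-1}`. -/
noncomputable def phi {R : Type*} [CommRing R] (Λ Ω : Matrix V V R) : Matrix V V R :=
  ((1 - Λ)⁻¹)ᵀ * Ω * (1 - Λ)⁻¹

/-- Evaluation of a polynomial in the coordinates `λ_vw` (left summand) and `ω_vw`
(right summand) at a parameter point `θ = (Λ, Ω)`. -/
noncomputable def evalParam (θ : Matrix V V ℝ × Matrix V V ℝ)
    (p : MvPolynomial ((V × V) ⊕ (V × V)) ℝ) : ℝ :=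
  MvPolynomial.eval (Sum.elim (fun e => θ.1 e.1 e.2) (fun e => θ.2 e.1 e.2)) p

/-- `V₀` is a proper algebraic subset of `Θ`: the intersection with `Θ` of the zero set of a
polynomial in the coordinates that does not vanish identically on `Θ`. -/
def IsProperAlgebraic (G : MixedGraph V)
    (V₀ : Set (Matrix V V ℝ × Matrix V V ℝ)) : Prop :=
  ∃ p : MvPolynomial ((V × V) ⊕ (V × V)) ℝ,
    (∃ θ ∈ G.Theta, evalParam θ p ≠ 0) ∧
    V₀ = {θ ∈ G.Theta | evalParam θ p = 0}

/-- Evaluation of a polynomial in the entries of a covariance matrix. -/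
noncomputable def evalAtCov (S : Matrix V V ℝ) (p : MvPolynomial (V × V) ℝ) : ℝ :=
  MvPolynomial.eval (fun e => S e.1 e.2) p

/-- `G` is rationally identifiable: some rational map `ψ` (each coordinate a quotient of
polynomials in the entries of the covariance matrix) satisfies `ψ ∘ φ_G = id` off a proper
algebraic subset of `Θ`. -/
def RationallyIdentifiable (G : MixedGraph V) : Prop :=
  ∃ V₀, G.IsProperAlgebraic V₀ ∧
    ∃ p q : ((V × V) ⊕ (V × V)) → MvPolynomial (V × V) ℝ,
      ∀ θ ∈ G.Theta \ V₀,
        (∀ i, evalAtCov (phi θ.1 θ.2) (q i) ≠ 0) ∧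
        (∀ v w : V, θ.1 v w * evalAtCov (phi θ.1 θ.2) (q (Sum.inl (v, w)))
            = evalAtCov (phi θ.1 θ.2) (p (Sum.inl (v, w)))) ∧
        (∀ v w : V, θ.2 v w * evalAtCov (phi θ.1 θ.2) (q (Sum.inr (v, w)))
            = evalAtCov (phi θ.1 θ.2) (p (Sum.inr (v, w))))

/-- `G` is generically identifiable: `φ_G` is injective off a proper algebraic subset. -/
def GenericallyIdentifiable (G : MixedGraph V) : Prop :=
  ∃ V₀, G.IsProperAlgebraic V₀ ∧
    Set.InjOn (fun θ : Matrix V V ℝ × Matrix V V ℝ => phi θ.1 θ.2) (G.Theta \ V₀)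

/-- `φ_G` is generically infinite-to-one. -/
def GenInfiniteToOne (G : MixedGraph V) : Prop :=
  ∃ V₀, G.IsProperAlgebraic V₀ ∧
    ∀ θ ∈ G.Theta \ V₀,
      {θ' ∈ G.Theta | phi θ'.1 θ'.2 = phi θ.1 θ.2}.Infinite

end MixedGraph

namespace MixedGraph

variable {V : Type*} [Fintype V] [DecidableEq V]

/-- Connectivity in the bidirected part `(V, B)`. -/
def bidirConn (G : MixedGraph V) : V → V → Prop :=
  Relation.ReflTransGen fun a b => (a, b) ∈ G.B

/-- The vertex set of the connected component of `c` in the bidirected part. -/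
noncomputable def comp (G : MixedGraph V) (c : V) : Finset V :=
  Finset.univ.filter fun w => G.bidirConn c w

/-- `V_j = C_j ∪ ⋃_{v ∈ C_j} pa(v)`. -/
noncomputable def compV (G : MixedGraph V) (c : V) : Finset V :=
  G.comp c ∪ (G.comp c).biUnion fun v => G.pa v

/-- The mixed component of `G` containing `c`: the mixed graph on `V_j` with directed
edges `D_j = {v → w ∈ D : v ∈ V_j, w ∈ C_j}` and bidirected edges `B_j = B ∩ (C_j × C_j)`. -/
noncomputable def component (G : MixedGraph V) (c : V) :
    MixedGraph {x : V // x ∈ G.compV c} where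
  D := Finset.univ.filter fun e : {x : V // x ∈ G.compV c} × {x : V // x ∈ G.compV c} =>
        ((e.1 : V), (e.2 : V)) ∈ G.D ∧ (e.2 : V) ∈ G.comp c
  B := Finset.univ.filter fun e : {x : V // x ∈ G.compV c} × {x : V // x ∈ G.compV c} =>
        ((e.1 : V), (e.2 : V)) ∈ G.B ∧ (e.1 : V) ∈ G.comp c ∧ (e.2 : V) ∈ G.comp c
  B_symm := by
    intro v w h
    simp only [Finset.mem_filter, Finset.mem_univ, true_and] at h ⊢
    exact ⟨G.B_symm _ _ h.1, h.2.2, h.2.1⟩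
  D_irrefl := by
    intro v h
    simp only [Finset.mem_filter, Finset.mem_univ, true_and] at h
    exact G.D_irrefl _ h.1
  B_irrefl := by
    intro v h
    simp only [Finset.mem_filter, Finset.mem_univ, true_and] at h
    exact G.B_irrefl _ h.1

end MixedGraph

section ListAux

variable {α : Type*} {R S : α → α → Prop} {p : α → Prop}

lemma chain'_and_tail : ∀ (l : List α), l.Chain' R → (∀ b ∈ l.tail, p b) →
    l.Chain' fun a b => R a b ∧ p b
  | [], _, _ => List.isChain_nil
  | [_], _, _ => List.isChain_singleton _
  | a :: b :: t, h, hp => by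
    rw [List.Chain', List.isChain_cons_cons] at h ⊢
    refine ⟨⟨h.1, hp b (by simp)⟩, chain'_and_tail (b :: t) h.2 ?_⟩
    intro x hx
    exact hp x (by simp at hx ⊢; tauto)

lemma chain'_reflTransGen : ∀ (l : List α), l.Chain' R → ∀ (hne : l ≠ []),
    Relation.ReflTransGen R (l.head hne) (l.getLast hne)
  | [], _, hne => absurd rfl hne
  | [a], _, _ => by
    simp only [List.head_cons, List.getLast_singleton]
    exact Relation.ReflTransGen.refl
  | a :: b :: t, h, _ => by
    rw [List.Chain', List.isChain_cons_cons] at h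
    have ih := chain'_reflTransGen (b :: t) h.2 (by simp)
    rw [List.head_cons, List.getLast_cons (by simp : (b :: t) ≠ [])]
    exact Relation.ReflTransGen.head h.1 (by simpa using ih)

end ListAux

namespace MixedGraph

variable {V : Type*} [Fintype V] [DecidableEq V]

/-! ### Basic lemmas about `comp`, `compV`, `pa`, `sib` -/

lemma mem_pa {G : MixedGraph V} {w v : V} : w ∈ G.pa v ↔ (w, v) ∈ G.D := by
  simp [pa]

lemma mem_sib {G : MixedGraph V} {w v : V} : w ∈ G.sib v ↔ (w, v) ∈ G.B := by
  simp [sib]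

lemma mem_comp {G : MixedGraph V} {c w : V} : w ∈ G.comp c ↔ G.bidirConn c w := by
  simp [comp]

lemma mem_comp_self (G : MixedGraph V) (c : V) : c ∈ G.comp c :=
  mem_comp.mpr Relation.ReflTransGen.refl

lemma bidirConn_symm {G : MixedGraph V} {a b : V} (h : G.bidirConn a b) : G.bidirConn b a :=
  (@Relation.ReflTransGen.symmetric _ (fun a b => (a, b) ∈ G.B) ⟨fun x y hxy => G.B_symm x y hxy⟩).symm _ _ h

lemma comp_eq {G : MixedGraph V} {a b : V} (h : G.bidirConn a b) : G.comp a = G.comp b := by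
  ext w
  simp only [mem_comp]
  exact ⟨fun hw => (bidirConn_symm h).trans hw, fun hw => h.trans hw⟩

lemma mem_comp_of_B {G : MixedGraph V} {c w x : V} (hw : w ∈ G.comp c)
    (h : (w, x) ∈ G.B) : x ∈ G.comp c :=
  mem_comp.mpr ((mem_comp.mp hw).tail h)

lemma comp_subset_compV (G : MixedGraph V) (c : V) : G.comp c ⊆ G.compV c :=
  Finset.subset_union_left

lemma mem_compV_of_pa {G : MixedGraph V} {c w x : V} (hw : w ∈ G.comp c)
    (h : (x, w) ∈ G.D) : x ∈ G.compV c :=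
  Finset.mem_union_right _ (Finset.mem_biUnion.mpr ⟨w, hw, mem_pa.mpr h⟩)

lemma component_D_iff {G : MixedGraph V} {c : V} {e : {x // x ∈ G.compV c} × {x // x ∈ G.compV c}} :
    e ∈ (G.component c).D ↔ ((e.1 : V), (e.2 : V)) ∈ G.D ∧ (e.2 : V) ∈ G.comp c := by
  simp [component]

lemma component_B_iff {G : MixedGraph V} {c : V} {e : {x // x ∈ G.compV c} × {x // x ∈ G.compV c}} :
    e ∈ (G.component c).B ↔ ((e.1 : V), (e.2 : V)) ∈ G.B ∧ (e.1 : V) ∈ G.comp c ∧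
      (e.2 : V) ∈ G.comp c := by
  simp [component]

lemma mem_pa_component {G : MixedGraph V} {c : V} {x w : {x // x ∈ G.compV c}} :
    w ∈ (G.component c).pa x ↔ ((w : V), (x : V)) ∈ G.D ∧ (x : V) ∈ G.comp c := by
  rw [mem_pa]; exact component_D_iff

lemma mem_sib_component {G : MixedGraph V} {c : V} {x w : {x // x ∈ G.compV c}} :
    w ∈ (G.component c).sib x ↔ ((w : V), (x : V)) ∈ G.B ∧ (w : V) ∈ G.comp c ∧
      (x : V) ∈ G.comp c := by
  rw [mem_sib]; exact component_B_iff

lemma pa_component_image {G : MixedGraph V} {c : V} {x : {x // x ∈ G.compV c}}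
    (hx : (x : V) ∈ G.comp c) :
    ((G.component c).pa x).image Subtype.val = G.pa (x : V) := by
  ext w
  simp only [Finset.mem_image, mem_pa]
  constructor
  · rintro ⟨w', hw', rfl⟩
    exact (component_D_iff.mp hw').1
  · intro hD
    exact ⟨⟨w, mem_compV_of_pa hx hD⟩, component_D_iff.mpr ⟨hD, hx⟩, rfl⟩

lemma pa_component_card {G : MixedGraph V} {c : V} {x : {x // x ∈ G.compV c}}
    (hx : (x : V) ∈ G.comp c) :
    ((G.component c).pa x).card = (G.pa (x : V)).card := by
  rw [← pa_component_image hx, Finset.card_image_of_injective _ Subtype.val_injective]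

/-! ### Trek lemmas -/

/-- The trivial trek at a vertex. -/
def Trek.trivial (G : MixedGraph V) (v : V) : G.Trek where
  left := [v]
  right := [v]
  left_ne := by simp
  right_ne := by simp
  hasBidir := false
  left_chain := List.isChain_singleton v
  right_chain := List.isChain_singleton v
  head_cond := by simp

lemma Trek.left_eq_single {G : MixedGraph V} (π : G.Trek) (h : π.IsHalfTrek) :
    π.left = [π.source] := by
  obtain ⟨a, ha⟩ := Finset.card_eq_one.mp h
  have hall : ∀ x ∈ π.left, x = a := by
    intro x hx
    have : x ∈ π.leftSet := List.mem_toFinset.mpr hx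
    rw [ha] at this
    simpa using this
  have hlen : π.left = [a] := by
    rcases hl : π.left with _ | ⟨x, _ | ⟨z, t⟩⟩
    · exact absurd hl π.left_ne
    · rw [hall x (by rw [hl]; simp)]
    · exfalso
      have hchain := π.left_chain
      rw [hl, List.Chain', List.isChain_cons_cons] at hchain
      have hx := hall x (by rw [hl]; simp)
      have hz := hall z (by rw [hl]; simp)
      rw [hx, hz] at hchain
      exact G.D_irrefl a hchain.1
  have hsrc : π.source = a := hall _ (List.getLast_mem π.left_ne)
  rw [hlen, hsrc]

lemma Trek.leftSet_eq_single {G : MixedGraph V} (π : G.Trek) (h : π.IsHalfTrek) :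
    π.leftSet = {π.source} := by
  unfold Trek.leftSet
  rw [π.left_eq_single h]
  simp

lemma Trek.left_length_one {G : MixedGraph V} (π : G.Trek) (h : π.IsHalfTrek) :
    π.left.length = 1 := by
  rw [π.left_eq_single h]; rfl

/-- Lift a trek in a mixed component to a trek in the ambient graph. -/
def Trek.lift {G : MixedGraph V} {c : V} (τ : (G.component c).Trek) : G.Trek where
  left := τ.left.map Subtype.val
  right := τ.right.map Subtype.val
  left_ne := fun h => τ.left_ne (List.map_eq_nil_iff.mp h)
  right_ne := fun h => τ.right_ne (List.map_eq_nil_iff.mp h)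
  hasBidir := τ.hasBidir
  left_chain := by
    rw [List.Chain', List.isChain_map]
    exact τ.left_chain.imp (fun a b h => (component_D_iff.mp h).1)
  right_chain := by
    rw [List.Chain', List.isChain_map]
    exact τ.right_chain.imp (fun a b h => (component_D_iff.mp h).1)
  head_cond := by
    have hc := τ.head_cond
    cases hb : τ.hasBidir
    · rw [hb] at hc
      simp only [Bool.false_eq_true, if_false] at hc ⊢
      rw [List.head_map, List.head_map, hc]
    · rw [hb] at hc
      simp only [if_true] at hc ⊢
      rw [List.head_map, List.head_map]
      exact (component_B_iff.mp hc).1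

@[simp] lemma Trek.lift_source {G : MixedGraph V} {c : V} (τ : (G.component c).Trek) :
    τ.lift.source = (τ.source : V) := by
  unfold Trek.lift Trek.source
  exact List.getLast_map _

@[simp] lemma Trek.lift_target {G : MixedGraph V} {c : V} (τ : (G.component c).Trek) :
    τ.lift.target = (τ.target : V) := by
  unfold Trek.lift Trek.target
  exact List.getLast_map _

lemma Trek.mem_lift_leftSet {G : MixedGraph V} {c : V} (τ : (G.component c).Trek) {x : V} :
    x ∈ τ.lift.leftSet ↔ ∃ y ∈ τ.leftSet, (y : V) = x := by
  unfold Trek.lift Trek.leftSet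
  simp only [List.mem_toFinset, List.mem_map]

lemma Trek.mem_lift_rightSet {G : MixedGraph V} {c : V} (τ : (G.component c).Trek) {x : V} :
    x ∈ τ.lift.rightSet ↔ ∃ y ∈ τ.rightSet, (y : V) = x := by
  unfold Trek.lift Trek.rightSet
  simp only [List.mem_toFinset, List.mem_map]

lemma Trek.lift_leftSet_eq {G : MixedGraph V} {c : V} (τ : (G.component c).Trek) :
    τ.lift.leftSet = τ.leftSet.image Subtype.val := by
  ext x
  simp only [Trek.mem_lift_leftSet, Finset.mem_image]

lemma Trek.lift_half {G : MixedGraph V} {c : V} (τ : (G.component c).Trek)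
    (h : τ.IsHalfTrek) : τ.lift.IsHalfTrek := by
  unfold Trek.IsHalfTrek at h ⊢
  rw [τ.lift_leftSet_eq, Finset.card_image_of_injective _ Subtype.val_injective]
  exact h

lemma Trek.lift_nEdges {G : MixedGraph V} {c : V} (τ : (G.component c).Trek) :
    τ.lift.nEdges = τ.nEdges := by
  unfold Trek.nEdges Trek.lift
  simp

end MixedGraph
section ListAux2

variable {α β : Type*}

lemma map_head_eq (f : α → β) (m : List α) (l : List β) (h : m.map f = l)
    (hm : m ≠ []) (hl : l ≠ []) : f (m.head hm) = l.head hl := by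
  subst h; rw [List.head_map]

lemma map_getLast_eq (f : α → β) (m : List α) (l : List β) (h : m.map f = l)
    (hm : m ≠ []) (hl : l ≠ []) : f (m.getLast hm) = l.getLast hl := by
  subst h; rw [List.getLast_map]

lemma head_eq_of_eq {l : List α} {a : α} (h : l = [a]) (hne : l ≠ []) : l.head hne = a := by
  subst h; rfl

lemma head_eq_of_cons {l t : List α} {a : α} (h : l = a :: t) (hne : l ≠ []) :
    l.head hne = a := by
  subst h; rfl

lemma getLast_eq_of_single {l : List α} {a : α} (h : l = [a]) (hne : l ≠ []) :
    l.getLast hne = a := by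
  subst h; rfl

lemma getLast_eq_of_suffix {l m : List α} (h : l <:+ m) (hl : l ≠ []) (hm : m ≠ []) :
    m.getLast hm = l.getLast hl := by
  obtain ⟨t, rfl⟩ := h
  rw [List.getLast_append]
  rw [dif_neg (by simp [hl])]

end ListAux2

namespace MixedGraph

variable {V : Type*} [Fintype V] [DecidableEq V]

lemma Trek.mem_leftSet {G : MixedGraph V} {π : G.Trek} {x : V} :
    x ∈ π.leftSet ↔ x ∈ π.left := List.mem_toFinset

lemma Trek.mem_rightSet {G : MixedGraph V} {π : G.Trek} {x : V} :
    x ∈ π.rightSet ↔ x ∈ π.right := List.mem_toFinset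

lemma Trek.lift_rightSet_eq {G : MixedGraph V} {c : V} (τ : (G.component c).Trek) :
    τ.lift.rightSet = τ.rightSet.image Subtype.val := by
  ext x
  simp only [Trek.mem_lift_rightSet, Finset.mem_image]

/-- Builder: a directed path inside a mixed component gives a half-trek. -/
lemma mkTrekAux (G : MixedGraph V) (c : V) (l : List V) (hl : l ≠ [])
    (H : ∀ x ∈ l, x ∈ G.compV c)
    (hchain : l.Chain' fun a b => (a, b) ∈ G.D ∧ b ∈ G.comp c) :
    ∃ τ : (G.component c).Trek, τ.IsHalfTrek ∧ (τ.source : V) = l.head hl ∧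
      (τ.target : V) = l.getLast hl ∧ ∀ x ∈ τ.rightSet, (x : V) ∈ l := by
  classical
  set m : List {x // x ∈ G.compV c} := l.attachWith _ H with hmdef
  have hm : m.map Subtype.val = l := by
    have h0 := List.attachWith_map_val (p := fun x => x ∈ G.compV c) (f := id) (l := l) H
    rw [List.map_id] at h0
    exact h0
  have hmne : m ≠ [] := fun h => hl (by rw [← hm, h]; rfl)
  have hchain' : m.Chain' fun a b => (a, b) ∈ (G.component c).D := by
    have h1 : (m.map Subtype.val).Chain' fun a b => (a, b) ∈ G.D ∧ b ∈ G.comp c := by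
      rw [hm]; exact hchain
    rw [List.Chain', List.isChain_map] at h1
    exact h1.imp (fun a b hab => component_D_iff.mpr hab)
  refine ⟨⟨[m.head hmne], m, by simp, hmne, false, List.isChain_singleton _, hchain', by simp⟩,
    ?_, ?_, ?_, ?_⟩
  · simp [Trek.IsHalfTrek, Trek.leftSet]
  · show ((([m.head hmne].getLast (by simp)) : V)) = l.head hl
    rw [List.getLast_singleton]
    exact map_head_eq Subtype.val m l hm hmne hl
  · show ((m.getLast hmne : V)) = l.getLast hl
    exact map_getLast_eq Subtype.val m l hm hmne hl
  · intro x hx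
    rw [← hm]
    exact List.mem_map.mpr ⟨x, List.mem_toFinset.mp hx, rfl⟩

lemma target_mem_comp {G : MixedGraph V} {c : V} (τ : (G.component c).Trek)
    (h1 : τ.IsHalfTrek) (h2 : 1 ≤ τ.nEdges) : (τ.target : V) ∈ G.comp c := by
  have hlen := τ.left_length_one h1
  have hr : 2 ≤ τ.right.length := by
    unfold Trek.nEdges at h2; rw [hlen] at h2; omega
  have hchain : τ.right.reverse.Chain' (flip fun a b => (a, b) ∈ (G.component c).D) :=
    List.isChain_reverse.mpr τ.right_chain
  have hrne : τ.right.reverse ≠ [] := by simp [τ.right_ne]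
  have key : ∀ (L : List {x // x ∈ G.compV c}),
      L.Chain' (flip fun a b => (a, b) ∈ (G.component c).D) → ∀ (hne : L ≠ []),
      2 ≤ L.length → ((L.head hne : V)) ∈ G.comp c := by
    rintro (_ | ⟨a, _ | ⟨b, t⟩⟩) hch hne hlen2
    · exact absurd rfl hne
    · simp at hlen2
    · rw [List.Chain', List.isChain_cons_cons] at hch
      have := (component_D_iff.mp hch.1).2
      simpa using this
  have := key τ.right.reverse hchain hrne (by simpa using hr)
  rw [List.head_reverse] at this
  exact this

lemma htr_lift {G : MixedGraph V} {c : V} {x w : {x // x ∈ G.compV c}}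
    (hx : (x : V) ∈ G.comp c) (hw : w ∈ (G.component c).htr x) :
    (w : V) ∈ G.htr (x : V) ∧ (w : V) ∈ G.comp c := by
  obtain ⟨hne, hnsib, τ, hsrc, htgt, hhalf, hE⟩ := hw
  have hwc : (w : V) ∈ G.comp c := by
    have := target_mem_comp τ hhalf hE
    rw [htgt] at this
    exact this
  refine ⟨⟨?_, ?_, τ.lift, ?_, ?_, τ.lift_half hhalf, ?_⟩, hwc⟩
  · intro h; exact hne (Subtype.ext h)
  · intro h
    exact hnsib (mem_sib_component.mpr ⟨mem_sib.mp h, hwc, hx⟩)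
  · rw [τ.lift_source, hsrc]
  · rw [τ.lift_target, htgt]
  · rw [τ.lift_nEdges]; exact hE

lemma satHTC_empty {G : MixedGraph V} {c : V} (x : {x // x ∈ G.compV c})
    (hx : (x : V) ∉ G.comp c) : (G.component c).SatisfiesHTC x ∅ := by
  have hpa : (G.component c).pa x = ∅ := by
    ext w
    simp only [mem_pa_component, Finset.notMem_empty, iff_false]
    exact fun h => hx h.2
  refine ⟨by rw [hpa], ?_, fun _ => Trek.trivial _ x, ?_, ⟨?_, ?_, ?_⟩, ?_⟩
  · intro y hy; exact absurd hy (Finset.notMem_empty y)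
  · intro y hy; exact absurd hy (Finset.notMem_empty y)
  · intro y hy; exact absurd hy (Finset.notMem_empty y)
  · rw [Finset.image_empty, hpa]
  · intro y hy; exact absurd hy (Finset.notMem_empty y)
  · intro y hy; exact absurd hy (Finset.notMem_empty y)

lemma satHTC_down {G : MixedGraph V} {c : V} (x : {x // x ∈ G.compV c})
    (hx : (x : V) ∈ G.comp c) (Y' : Finset {x // x ∈ G.compV c})
    (h : (G.component c).SatisfiesHTC x Y') :
    G.SatisfiesHTC (x : V) (Y'.image Subtype.val) := by
  classical
  obtain ⟨hcard, hcond, f', hhalf, ⟨hsrc, himg, hdist⟩, hnsi⟩ := h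
  set F : V → G.Trek := fun z =>
    if h : z ∈ G.compV c then ((f' ⟨z, h⟩).lift) else Trek.trivial G (x : V) with hF
  have heval : ∀ y' ∈ Y', F (y' : V) = (f' y').lift := by
    intro y' _
    rw [hF]; dsimp only
    rw [dif_pos y'.2]
  refine ⟨?_, ?_, F, ?_, ⟨?_, ?_, ?_⟩, ?_⟩
  · rw [Finset.card_image_of_injective _ Subtype.val_injective, hcard]
    exact pa_component_card hx
  · intro y hy
    obtain ⟨y', hy', rfl⟩ := Finset.mem_image.mp hy
    constructor
    · intro he; exact (hcond y' hy').1 (Subtype.ext he)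
    · intro hsib
      have hB := mem_sib.mp hsib
      have hyc : (y' : V) ∈ G.comp c := mem_comp_of_B hx (G.B_symm _ _ hB)
      exact (hcond y' hy').2 (mem_sib_component.mpr ⟨hB, hyc, hx⟩)
  · intro y hy
    obtain ⟨y', hy', rfl⟩ := Finset.mem_image.mp hy
    rw [heval y' hy']
    exact Trek.lift_half _ (hhalf y' hy')
  · intro y hy
    obtain ⟨y', hy', rfl⟩ := Finset.mem_image.mp hy
    rw [heval y' hy', Trek.lift_source, hsrc y' hy']
  · rw [Finset.image_image]
    have e1 : Y'.image ((fun y => (F y).target) ∘ Subtype.val)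
        = Y'.image (fun y' => (((f' y').target : V))) := by
      apply Finset.image_congr
      intro y' hy'
      simp only [Function.comp_apply]
      rw [heval y' hy', Trek.lift_target]
    rw [e1, show (fun y' => (((f' y').target : V)))
        = (Subtype.val ∘ fun y' => (f' y').target) from rfl, ← Finset.image_image, himg]
    exact pa_component_image hx
  · intro y1 hy1 y2 hy2 hne
    obtain ⟨y1', hy1', rfl⟩ := Finset.mem_image.mp hy1
    obtain ⟨y2', hy2', rfl⟩ := Finset.mem_image.mp hy2
    rw [heval y1' hy1', heval y2' hy2', Trek.lift_target, Trek.lift_target]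
    intro hcon
    exact hdist y1' hy1' y2' hy2' (fun he => hne (by rw [he]))
      (Subtype.val_injective hcon)
  · intro y1 hy1 y2 hy2 hne
    obtain ⟨y1', hy1', rfl⟩ := Finset.mem_image.mp hy1
    obtain ⟨y2', hy2', rfl⟩ := Finset.mem_image.mp hy2
    have hne' : y1' ≠ y2' := fun he => hne (by rw [he])
    obtain ⟨hd1, hd2⟩ := hnsi y1' hy1' y2' hy2' hne'
    rw [heval y1' hy1', heval y2' hy2']
    constructor
    · rw [Trek.lift_leftSet_eq, Trek.lift_leftSet_eq]
      rw [Finset.disjoint_image Subtype.val_injective]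
      exact hd1
    · rw [Trek.lift_rightSet_eq, Trek.lift_rightSet_eq]
      rw [Finset.disjoint_image Subtype.val_injective]
      exact hd2

lemma source_path {G : MixedGraph V} {c : V} (x : {x // x ∈ G.compV c})
    (hx : (x : V) ∈ G.comp c) (Y' : Finset {x // x ∈ G.compV c})
    (h : (G.component c).SatisfiesHTC x Y') {z : {x // x ∈ G.compV c}} (hz : z ∈ Y')
    (hzc : (z : V) ∉ G.comp c) :
    Relation.TransGen (fun a b => (a, b) ∈ G.D) (z : V) (x : V) := by
  obtain ⟨-, -, f, hhalf, ⟨hsrc, himg, -⟩, -⟩ := h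
  have htgt : (f z).target ∈ (G.component c).pa x := by
    rw [← himg]; exact Finset.mem_image_of_mem _ hz
  have hD : (((f z).target : V), (x : V)) ∈ G.D := (mem_pa_component.mp htgt).1
  have hh := hhalf z hz
  have hleft := (f z).left_eq_single hh
  have hsz := hsrc z hz
  have hlh : (f z).left.head (f z).left_ne = (f z).source := head_eq_of_eq hleft _
  have hc := (f z).head_cond
  cases hb : (f z).hasBidir
  · rw [hb] at hc
    simp only [Bool.false_eq_true, if_false] at hc
    have hrh : (f z).right.head (f z).right_ne = z := by rw [← hc, hlh, hsz]
    have hchainV : ((f z).right.map Subtype.val).Chain' fun a b => (a, b) ∈ G.D := by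
      rw [List.Chain', List.isChain_map]
      exact (f z).right_chain.imp (fun a b hab => (component_D_iff.mp hab).1)
    have hmne : (f z).right.map Subtype.val ≠ [] :=
      fun h2 => (f z).right_ne (List.map_eq_nil_iff.mp h2)
    have hrtg := chain'_reflTransGen _ hchainV hmne
    have e1 : ((f z).right.map Subtype.val).head hmne = (z : V) := by
      rw [← map_head_eq Subtype.val (f z).right _ rfl (f z).right_ne hmne, hrh]
    have e2 : ((f z).right.map Subtype.val).getLast hmne = ((f z).target : V) := by
      rw [← map_getLast_eq Subtype.val (f z).right _ rfl (f z).right_ne hmne]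
      rfl
    rw [e1, e2] at hrtg
    exact Relation.TransGen.tail' hrtg hD
  · exfalso
    rw [hb] at hc
    simp only [if_true] at hc
    have hmem := (component_B_iff.mp hc).2.1
    rw [hlh, hsz] at hmem
    exact hzc hmem

end MixedGraph
namespace MixedGraph

variable {V : Type*} [Fintype V] [DecidableEq V]

/-- Truncation of a half-trek in `G` targeting a vertex of `V_j` to a half-trek in `G_j`. -/
lemma trek_truncate (G : MixedGraph V) (c : V) (π : G.Trek) (hhalf : π.IsHalfTrek)
    (hp : π.target ∈ G.compV c) :
    ∃ τ : (G.component c).Trek, τ.IsHalfTrek ∧ ((τ.target : V) = π.target) ∧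
      (∀ x ∈ τ.rightSet, (x : V) ∈ π.rightSet) ∧
      ((τ.source : V) ∈ G.comp c → (τ.source : V) = π.source) ∧
      ((τ.source : V) ∉ G.comp c → (τ.source : V) ∈ π.rightSet) := by
  classical
  have hRne := π.right_ne
  have hleft := π.left_eq_single hhalf
  have hlh : π.left.head π.left_ne = π.source := head_eq_of_eq hleft _
  set pr : V → Bool := fun x => decide (x ∈ G.comp c) with hpr
  by_cases hBd : π.right.reverse.dropWhile pr = []
  · -- the whole right side lies in the component: keep the trek
    have hrev : π.right.reverse = π.right.reverse.takeWhile pr := by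
      conv_lhs => rw [← List.takeWhile_append_dropWhile (p := pr) (l := π.right.reverse)]
      rw [hBd, List.append_nil]
    have hall : ∀ x ∈ π.right, x ∈ G.comp c := by
      intro x hx
      have hx2 : x ∈ π.right.reverse.takeWhile pr := by
        rw [← hrev]; exact List.mem_reverse.mpr hx
      have := List.mem_takeWhile_imp hx2
      rw [hpr] at this
      exact of_decide_eq_true this
    have hhead : π.right.head hRne ∈ G.comp c := hall _ (List.head_mem _)
    have hsrccomp : π.source ∈ G.comp c := by
      have hc := π.head_cond
      cases hb : π.hasBidir
      · rw [hb] at hc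
        simp only [Bool.false_eq_true, if_false] at hc
        rw [hlh] at hc
        rw [hc]; exact hhead
      · rw [hb] at hc
        simp only [if_true] at hc
        rw [hlh] at hc
        exact mem_comp_of_B hhead (G.B_symm _ _ hc)
    have hmemV : ∀ x ∈ π.right, x ∈ G.compV c := fun x hx => comp_subset_compV G c (hall x hx)
    set m := π.right.attachWith _ hmemV with hmdef
    have hm : m.map Subtype.val = π.right := by
      have h0 := List.attachWith_map_val (p := fun x => x ∈ G.compV c) (f := id) (l := π.right) hmemV
      rw [List.map_id] at h0
      exact h0
    have hmne : m ≠ [] := fun h0 => hRne (by rw [← hm, h0]; rfl)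
    have hchain' : m.Chain' fun a b => (a, b) ∈ (G.component c).D := by
      have h1 : (m.map Subtype.val).Chain' fun a b => (a, b) ∈ G.D ∧ b ∈ G.comp c := by
        rw [hm]
        exact chain'_and_tail _ π.right_chain (fun b hb => hall b (List.mem_of_mem_tail hb))
      rw [List.Chain', List.isChain_map] at h1
      exact h1.imp (fun a b hab => component_D_iff.mpr hab)
    refine ⟨⟨[⟨π.source, comp_subset_compV G c hsrccomp⟩], m, by simp, hmne, π.hasBidir,
      List.isChain_singleton _, hchain', ?_⟩, ?_, ?_, ?_, ?_, ?_⟩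
    · cases hb : π.hasBidir
      · simp only [Bool.false_eq_true, if_false, List.head_cons]
        have hc := π.head_cond
        rw [hb] at hc
        simp only [Bool.false_eq_true, if_false] at hc
        rw [hlh] at hc
        apply Subtype.ext
        rw [map_head_eq Subtype.val m _ hm hmne hRne]
        exact hc
      · simp only [if_true, List.head_cons]
        have hc := π.head_cond
        rw [hb] at hc
        simp only [if_true] at hc
        rw [hlh] at hc
        apply component_B_iff.mpr
        refine ⟨?_, hsrccomp, ?_⟩
        · show (π.source, (m.head hmne : V)) ∈ G.B
          rw [map_head_eq Subtype.val m _ hm hmne hRne]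
          exact hc
        · show ((m.head hmne : V)) ∈ G.comp c
          rw [map_head_eq Subtype.val m _ hm hmne hRne]
          exact hhead
    · simp [Trek.IsHalfTrek, Trek.leftSet]
    · show ((m.getLast hmne : V)) = π.target
      exact map_getLast_eq Subtype.val m _ hm hmne hRne
    · intro x hx
      rw [Trek.mem_rightSet]
      have : (x : V) ∈ m.map Subtype.val :=
        List.mem_map.mpr ⟨x, List.mem_toFinset.mp hx, rfl⟩
      rw [hm] at this
      exact this
    · intro _; rfl
    · intro h0
      exact absurd hsrccomp h0
  · -- truncate at the last vertex outside the component
    obtain ⟨r, rest, hBd'⟩ : ∃ r rest, π.right.reverse.dropWhile pr = r :: rest := by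
      rcases h0 : π.right.reverse.dropWhile pr with _ | ⟨r, rest⟩
      · exact absurd h0 hBd
      · exact ⟨r, rest, rfl⟩
    have hrnot : r ∉ G.comp c := by
      have h1 := List.head_dropWhile_not pr (l := π.right.reverse) (by rw [hBd']; simp)
      rw [head_eq_of_cons hBd'] at h1
      rw [hpr] at h1
      simpa using of_decide_eq_false h1
    set A := π.right.reverse.takeWhile pr with hA
    have hAmem : ∀ x ∈ A, x ∈ G.comp c := by
      intro x hx
      have := List.mem_takeWhile_imp hx
      rw [hpr] at this
      exact of_decide_eq_true this
    have hdecomp : π.right = rest.reverse ++ (r :: A.reverse) := by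
      have h1 : A ++ (r :: rest) = π.right.reverse := by
        rw [hA, ← hBd']
        exact List.takeWhile_append_dropWhile (p := pr)
      have h2 := congrArg List.reverse h1
      rw [List.reverse_reverse] at h2
      rw [← h2]
      simp [List.reverse_append]
    set l := r :: A.reverse with hldef
    have hsuff : l <:+ π.right := ⟨rest.reverse, hdecomp.symm⟩
    have hlne : l ≠ [] := by rw [hldef]; exact List.cons_ne_nil _ _
    have hchainD : l.Chain' fun a b => (a, b) ∈ G.D := π.right_chain.suffix hsuff
    have htail : ∀ b ∈ l.tail, b ∈ G.comp c := by
      intro b hb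
      rw [hldef, List.tail_cons] at hb
      exact hAmem b (List.mem_reverse.mp hb)
    have hchain : l.Chain' fun a b => (a, b) ∈ G.D ∧ b ∈ G.comp c :=
      chain'_and_tail _ hchainD htail
    have hmemV : ∀ x ∈ l, x ∈ G.compV c := by
      intro x2 hx2
      rw [hldef, List.mem_cons] at hx2
      rcases hx2 with rfl | hx2
      · rcases hA2 : A.reverse with _ | ⟨h0, t0⟩
        · have hone : l = [x2] := by rw [hldef, hA2]
          have : π.right.getLast hRne = x2 := by
            rw [getLast_eq_of_suffix hsuff hlne hRne, getLast_eq_of_single hone]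
          rw [← this]
          exact hp
        · have hc0 : h0 ∈ G.comp c := hAmem h0 (List.mem_reverse.mp (by rw [hA2]; simp))
          have hD0 : (x2, h0) ∈ G.D := by
            have h3 := hchainD
            rw [hldef, hA2, List.Chain', List.isChain_cons_cons] at h3
            exact h3.1
          exact mem_compV_of_pa hc0 hD0
      · exact comp_subset_compV G c (hAmem x2 (List.mem_reverse.mp hx2))
    obtain ⟨τ, h1, h2, h3, h4⟩ := mkTrekAux G c l hlne hmemV hchain
    have hheadl : l.head hlne = r := head_eq_of_cons hldef hlne
    refine ⟨τ, h1, ?_, ?_, ?_, ?_⟩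
    · rw [h3, ← getLast_eq_of_suffix hsuff hlne hRne]
      rfl
    · intro x2 hx2
      rw [Trek.mem_rightSet]
      exact hsuff.subset (h4 x2 hx2)
    · intro hmem
      rw [h2, hheadl] at hmem
      exact absurd hmem hrnot
    · intro _
      have hrmem : r ∈ l := by rw [hldef]; exact List.mem_cons_self
      rw [Trek.mem_rightSet, h2, hheadl]
      exact hsuff.subset hrmem

lemma satHTC_up {G : MixedGraph V} {c : V} (x : {x // x ∈ G.compV c})
    (hx : (x : V) ∈ G.comp c) (Y : Finset V) (h : G.SatisfiesHTC (x : V) Y) :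
    ∃ Y' : Finset {x // x ∈ G.compV c},
      (G.component c).SatisfiesHTC x Y' ∧
      ∀ y' ∈ Y', ((y' : V) ∈ G.comp c → (y' : V) ∈ Y) := by
  classical
  obtain ⟨hcard, hcond, f, hhalf, ⟨hsrc, himg, hdist⟩, hnsi⟩ := h
  have htgtpa : ∀ y ∈ Y, (f y).target ∈ G.pa (x : V) := by
    intro y hy
    rw [← himg]
    exact Finset.mem_image_of_mem _ hy
  have hex : ∀ y ∈ Y, ∃ τ : (G.component c).Trek, τ.IsHalfTrek ∧
      ((τ.target : V) = (f y).target) ∧ (∀ z ∈ τ.rightSet, (z : V) ∈ (f y).rightSet) ∧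
      ((τ.source : V) ∈ G.comp c → (τ.source : V) = (f y).source) ∧
      ((τ.source : V) ∉ G.comp c → (τ.source : V) ∈ (f y).rightSet) := by
    intro y hy
    exact trek_truncate G c (f y) (hhalf y hy)
      (mem_compV_of_pa hx (mem_pa.mp (htgtpa y hy)))
  choose g hg1 hg2 hg3 hg4 hg5 using hex
  have hsinj : ∀ y1, ∀ (h1 : y1 ∈ Y), ∀ y2, ∀ (h2 : y2 ∈ Y),
      (g y1 h1).source = (g y2 h2).source → y1 = y2 := by
    intro y1 h1 y2 h2 heq
    by_contra hne
    have hval : ((g y1 h1).source : V) = ((g y2 h2).source : V) := congrArg _ heq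
    by_cases hcs : ((g y1 h1).source : V) ∈ G.comp c
    · have e1 := hg4 y1 h1 hcs
      have e2 := hg4 y2 h2 (hval ▸ hcs)
      rw [hsrc y1 h1] at e1
      rw [hsrc y2 h2] at e2
      exact hne (by rw [← e1, hval, e2])
    · have e1 := hg5 y1 h1 hcs
      have e2 := hg5 y2 h2 (fun hmem => hcs (by rw [hval]; exact hmem))
      have hd := (hnsi y1 h1 y2 h2 hne).2
      apply Finset.disjoint_left.mp hd e1
      rw [hval]
      exact e2
  set s : {z // z ∈ Y} → {x // x ∈ G.compV c} := fun z => (g z.1 z.2).source with hs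
  have hs_inj : Function.Injective s := by
    intro a b hab
    exact Subtype.ext (hsinj a.1 a.2 b.1 b.2 hab)
  set Y' := Y.attach.image s with hY'
  set F : {x // x ∈ G.compV c} → (G.component c).Trek := fun z =>
    if h : ∃ a : {z // z ∈ Y}, s a = z then g (Classical.choose h).1 (Classical.choose h).2
    else Trek.trivial _ x with hF
  have hFs : ∀ a : {z // z ∈ Y}, F (s a) = g a.1 a.2 := by
    intro a
    have hex2 : ∃ b : {z // z ∈ Y}, s b = s a := ⟨a, rfl⟩
    have hsa : Classical.choose hex2 = a := hs_inj (Classical.choose_spec hex2)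
    rw [hF]
    dsimp only
    rw [dif_pos hex2, hsa]
  have hmem' : ∀ z ∈ Y', ∃ a : {z // z ∈ Y}, s a = z := by
    intro z hz
    obtain ⟨a, -, ha⟩ := Finset.mem_image.mp hz
    exact ⟨a, ha⟩
  refine ⟨Y', ⟨?_, ?_, F, ?_, ⟨?_, ?_, ?_⟩, ?_⟩, ?_⟩
  · rw [hY', Finset.card_image_of_injective _ hs_inj, Finset.card_attach, hcard]
    exact (pa_component_card hx).symm
  · intro z hz
    obtain ⟨a, rfl⟩ := hmem' z hz
    by_cases hcs : ((s a : V)) ∈ G.comp c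
    · have e1 : ((s a : V)) = a.1 := by
        rw [hs]
        dsimp only
        rw [hg4 a.1 a.2 hcs, hsrc a.1 a.2]
      have hca := hcond a.1 a.2
      constructor
      · intro hcon
        exact hca.1 (by rw [← e1, hcon])
      · intro hcon
        have hB := (mem_sib_component.mp hcon).1
        apply hca.2
        rw [mem_sib, ← e1]
        exact hB
    · constructor
      · intro hcon
        exact hcs (by rw [hcon]; exact hx)
      · intro hcon
        exact hcs (mem_sib_component.mp hcon).2.1
  · intro z hz
    obtain ⟨a, rfl⟩ := hmem' z hz
    rw [hFs]
    exact hg1 a.1 a.2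
  · intro z hz
    obtain ⟨a, rfl⟩ := hmem' z hz
    rw [hFs]
  · apply Finset.image_injective Subtype.val_injective
    rw [pa_component_image hx, ← himg, Finset.image_image, hY', Finset.image_image]
    ext w
    simp only [Finset.mem_image, Finset.mem_attach, true_and, Function.comp_apply]
    constructor
    · rintro ⟨a, rfl⟩
      refine ⟨a.1, a.2, ?_⟩
      rw [hFs]
      exact (hg2 a.1 a.2).symm
    · rintro ⟨y, hy, rfl⟩
      refine ⟨⟨y, hy⟩, ?_⟩
      rw [hFs]
      exact hg2 y hy
  · intro z1 hz1 z2 hz2 hne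
    obtain ⟨a, rfl⟩ := hmem' z1 hz1
    obtain ⟨b, rfl⟩ := hmem' z2 hz2
    rw [hFs, hFs]
    intro hcon
    have hab : a.1 ≠ b.1 := fun he => hne (congrArg s (Subtype.ext he))
    apply hdist a.1 a.2 b.1 b.2 hab
    rw [← hg2 a.1 a.2, ← hg2 b.1 b.2, hcon]
  · intro z1 hz1 z2 hz2 hne
    obtain ⟨a, rfl⟩ := hmem' z1 hz1
    obtain ⟨b, rfl⟩ := hmem' z2 hz2
    have hab : a.1 ≠ b.1 := fun he => hne (congrArg s (Subtype.ext he))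
    rw [hFs, hFs]
    constructor
    · rw [(g a.1 a.2).leftSet_eq_single (hg1 a.1 a.2),
        (g b.1 b.2).leftSet_eq_single (hg1 b.1 b.2)]
      rw [Finset.disjoint_singleton_left, Finset.mem_singleton]
      exact hne
    · rw [Finset.disjoint_left]
      intro t ht1 ht2
      have m1 := hg3 a.1 a.2 t ht1
      have m2 := hg3 b.1 b.2 t ht2
      exact Finset.disjoint_left.mp (hnsi a.1 a.2 b.1 b.2 hab).2 m1 m2
  · intro z hz hcs
    obtain ⟨a, rfl⟩ := hmem' z hz
    have := hg4 a.1 a.2 hcs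
    rw [hsrc a.1 a.2] at this
    rw [this]
    exact a.2

end MixedGraph
/-- If an acyclic mixed graph `G` is HTC-identifiable, then all of its mixed components are
HTC-identifiable.  Furthermore, `G` is HTC-infinite-to-one if and only if some mixed
component of `G` is HTC-infinite-to-one. -/
theorem htc_mixed_components {V : Type*} [Fintype V] [DecidableEq V]
    (G : MixedGraph V) (hacyclic : G.Acyclic) :
    (G.HTCIdentifiable → ∀ c : V, (G.component c).HTCIdentifiable) ∧
    (G.HTCInfiniteToOne ↔ ∃ c : V, (G.component c).HTCInfiniteToOne) := by
  classical
  constructor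
  · -- identifiability passes to mixed components
    rintro ⟨Y, hsat, r, hr, hord⟩ c
    have H : ∀ v : {x // x ∈ G.compV c}, ∃ Y',
        (G.component c).SatisfiesHTC v Y' ∧
        (∀ y' ∈ Y', ((y' : V) ∈ G.comp c → (y' : V) ∈ Y (v : V))) ∧
        ((v : V) ∉ G.comp c → Y' = ∅) := by
      intro v
      by_cases hv : (v : V) ∈ G.comp c
      · obtain ⟨Y', h1, h2⟩ := MixedGraph.satHTC_up v hv (Y (v : V)) (hsat (v : V))
        exact ⟨Y', h1, h2, fun hcon => absurd hv hcon⟩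
      · exact ⟨∅, MixedGraph.satHTC_empty v hv, by simp, fun _ => rfl⟩
    choose Y' hY1 hY2 hY3 using H
    haveI := hr
    haveI htri : IsTrichotomous {x // x ∈ G.compV c} (fun a b => r (a : V) (b : V)) := by
      constructor
      intro a b hab hba
      rcases trichotomous_of r (a : V) (b : V) with h | h | h
      · exact absurd h hab
      · exact Subtype.ext h
      · exact absurd h hba
    haveI hirr : IsIrrefl {x // x ∈ G.compV c} (fun a b => r (a : V) (b : V)) :=
      ⟨fun a => irrefl_of r (a : V)⟩
    haveI htra : IsTrans {x // x ∈ G.compV c} (fun a b => r (a : V) (b : V)) :=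
      ⟨fun _ _ _ hab hbc => trans_of r hab hbc⟩
    haveI hso : IsStrictOrder {x // x ∈ G.compV c} (fun a b => r (a : V) (b : V)) := ⟨⟩
    refine ⟨Y', hY1, fun a b => r (a : V) (b : V), ⟨⟩, ?_⟩
    intro v w hw hhtr
    by_cases hv : (v : V) ∈ G.comp c
    · obtain ⟨hhtrG, hwc⟩ := MixedGraph.htr_lift hv hhtr
      exact hord (v : V) (w : V) (hY2 v w hw hwc) hhtrG
    · rw [hY3 v hv] at hw
      exact absurd hw (Finset.notMem_empty w)
  constructor
  · -- forward direction
    intro hG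
    by_contra hno
    push_neg at hno
    have hex : ∀ c : V, ∃ Yc : {x // x ∈ G.compV c} → Finset {x // x ∈ G.compV c},
        (∀ v, (G.component c).SatisfiesHTC v (Yc v)) ∧
        (∀ v w, v ∈ Yc w → w ∉ Yc v) := by
      intro c
      have h := hno c
      unfold MixedGraph.HTCInfiniteToOne at h
      push_neg at h
      exact h
    choose Yc hYsat hYnomut using hex
    letI : LinearOrder V := LinearOrder.lift' (Fintype.equivFin V) (Fintype.equivFin V).injective
    have hcompne : ∀ v : V, (G.comp v).Nonempty := fun v => ⟨v, G.mem_comp_self v⟩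
    set rep : V → V := fun v => (G.comp v).min' (hcompne v) with hrep
    have hrep_mem : ∀ v, rep v ∈ G.comp v := fun v => Finset.min'_mem _ _
    have hrep_eq : ∀ v w, G.comp v = G.comp w → rep v = rep w := by
      intro v w hvw
      apply le_antisymm
      · exact Finset.min'_le _ _ (by rw [hvw]; exact Finset.min'_mem _ _)
      · exact Finset.min'_le _ _ (by rw [← hvw]; exact Finset.min'_mem _ _)
    have hvrep : ∀ v : V, v ∈ G.comp (rep v) := by
      intro v
      have h1 : G.bidirConn v (rep v) := MixedGraph.mem_comp.mp (hrep_mem v)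
      rw [MixedGraph.comp_eq (MixedGraph.bidirConn_symm h1)]
      exact G.mem_comp_self _
    have hvmem : ∀ v : V, v ∈ G.compV (rep v) :=
      fun v => MixedGraph.comp_subset_compV _ _ (hvrep v)
    set Y : V → Finset V :=
      fun v => (Yc (rep v) ⟨v, hvmem v⟩).image Subtype.val with hY
    rcases hG Y with ⟨v, hnsat⟩ | ⟨v, w, hvw, hwv⟩
    · exact hnsat
        (MixedGraph.satHTC_down ⟨v, hvmem v⟩ (hvrep v) _ (hYsat (rep v) ⟨v, hvmem v⟩))
    · have hvw' := hvw
      have hwv' := hwv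
      rw [hY] at hvw' hwv'
      obtain ⟨v', hv'mem, hv'val⟩ := Finset.mem_image.mp hvw'
      obtain ⟨w', hw'mem, hw'val⟩ := Finset.mem_image.mp hwv'
      by_cases hconn : G.bidirConn v w
      · have he : rep v = rep w := hrep_eq v w (MixedGraph.comp_eq hconn)
        have htrans : ∀ (c c' : V), c = c' →
            ∀ (a : {x // x ∈ G.compV c}) (a' : {x // x ∈ G.compV c'}),
            (a : V) = (a' : V) → ∀ (b : {x // x ∈ G.compV c}) (b' : {x // x ∈ G.compV c'}),
            (b : V) = (b' : V) → a ∈ Yc c b → a' ∈ Yc c' b' := by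
          intro c c' hcc'
          subst hcc'
          intro a a' ha b b' hb hmemb
          rw [← Subtype.ext ha, ← Subtype.ext hb]
          exact hmemb
        have hm2 : (⟨w, hvmem w⟩ : {x // x ∈ G.compV (rep w)}) ∈ Yc (rep w) v' :=
          htrans (rep v) (rep w) he w' ⟨w, hvmem w⟩ hw'val ⟨v, hvmem v⟩ v' hv'val.symm hw'mem
        exact hYnomut (rep w) v' ⟨w, hvmem w⟩ hv'mem hm2
      · have hcompw : G.comp (rep w) = G.comp w :=
          MixedGraph.comp_eq (MixedGraph.mem_comp.mp (hvrep w))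
        have hcompv : G.comp (rep v) = G.comp v :=
          MixedGraph.comp_eq (MixedGraph.mem_comp.mp (hvrep v))
        have h1 : Relation.TransGen (fun a b => (a, b) ∈ G.D) v w := by
          have hz : (v' : V) ∉ G.comp (rep w) := by
            intro hcon
            rw [hv'val, hcompw, MixedGraph.mem_comp] at hcon
            exact hconn (MixedGraph.bidirConn_symm hcon)
          have := MixedGraph.source_path ⟨w, hvmem w⟩ (hvrep w) _
            (hYsat (rep w) ⟨w, hvmem w⟩) hv'mem hz
          rw [hv'val] at this
          exact this
        have h2 : Relation.TransGen (fun a b => (a, b) ∈ G.D) w v := by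
          have hz : (w' : V) ∉ G.comp (rep v) := by
            intro hcon
            rw [hw'val, hcompv, MixedGraph.mem_comp] at hcon
            exact hconn hcon
          have := MixedGraph.source_path ⟨v, hvmem v⟩ (hvrep v) _
            (hYsat (rep v) ⟨v, hvmem v⟩) hw'mem hz
          rw [hw'val] at this
          exact this
        exact hacyclic v (h1.trans h2)
  · -- backward direction
    rintro ⟨c, hc⟩
    intro Y
    by_contra hcon
    push_neg at hcon
    obtain ⟨hsat, hnomut⟩ := hcon
    have H : ∀ v : {x // x ∈ G.compV c}, ∃ Y',
        (G.component c).SatisfiesHTC v Y' ∧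
        (∀ y' ∈ Y', ((y' : V) ∈ G.comp c → (y' : V) ∈ Y (v : V))) ∧
        ((v : V) ∉ G.comp c → Y' = ∅) := by
      intro v
      by_cases hv : (v : V) ∈ G.comp c
      · obtain ⟨Y', h1, h2⟩ := MixedGraph.satHTC_up v hv (Y (v : V)) (hsat (v : V))
        exact ⟨Y', h1, h2, fun hcon2 => absurd hv hcon2⟩
      · exact ⟨∅, MixedGraph.satHTC_empty v hv, by simp, fun _ => rfl⟩
    choose Y' h1 h2 h3 using H
    rcases hc Y' with ⟨v, hnsat⟩ | ⟨v, w, hvw, hwv⟩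
    · exact hnsat (h1 v)
    · have hwc : (w : V) ∈ G.comp c := by
        by_contra hcon2
        rw [h3 w hcon2] at hvw
        exact absurd hvw (Finset.notMem_empty v)
      have hvc : (v : V) ∈ G.comp c := by
        by_contra hcon2
        rw [h3 v hcon2] at hwv
        exact absurd hwv (Finset.notMem_empty w)
      exact hnomut (v : V) (w : V) (h2 w v hvw hvc) (h2 v w hwv hwc)
end

section
/- Trek rule: Let G=(V,D,B) be an acyclic mixed graph, let Λ be a real m×m matrix with λ_vw=0 whenever v→w∉D, and let Ω be a symmetric real m×m matrix with ω_vw=0 whenever v≠w and v↔w∉B. Then I−Λ is invertible and, for all v,w∈V, the (v,w) entry of Σ=(I−Λ)^{−T}Ω(I−Λ)^{−1} equals the sum, over the (finitely many) treks π from v to w in G, of the trek monomials π(λ,ω). -/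
open scoped Classical Matrix

namespace MixedGraph

variable {V : Type*} [Fintype V] [DecidableEq V]

/-- The product of the coefficients `Λ x y` over the directed edges `x → y` traversed by a
list of nodes. -/
def edgeProd (Λ : Matrix V V ℝ) (l : List V) : ℝ :=
  ((l.zip l.tail).map fun e => Λ e.1 e.2).prod

/-- The trek monomial `π(λ, ω)`: the covariance `ω` at the top (pair of) node(s) times the
product of the coefficients `λ` along all directed edges of the trek. -/
def Trek.monomial {G : MixedGraph V} (Λ Ω : Matrix V V ℝ) (π : G.Trek) : ℝ :=
  Ω (π.left.head π.left_ne) (π.right.head π.right_ne) *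
    edgeProd Λ π.left * edgeProd Λ π.right

end MixedGraph

section TrekRuleAux

open Finset

namespace MixedGraph

variable {V : Type*} [Fintype V] [DecidableEq V]

/-- Lists of length `k+1` with head `a` and last `v`. -/
def EkF : ℕ → V → V → Finset (List V)
  | 0, a, v => if a = v then {[v]} else ∅
  | k+1, a, v => Finset.univ.biUnion fun x => (EkF k x v).image fun l => a :: l

lemma mem_EkF : ∀ (k : ℕ) (a v : V) (l : List V),
    l ∈ EkF k a v ↔ l.length = k + 1 ∧ l.head? = some a ∧ l.getLast? = some v := by
  intro k
  induction k with
  | zero =>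
    intro a v l
    by_cases h : a = v
    · subst h
      rw [EkF, if_pos rfl]
      constructor
      · intro hl
        rw [Finset.mem_singleton] at hl
        subst hl; simp
      · rintro ⟨h1, h2, h3⟩
        match l, h1 with
        | [x], _ =>
          rw [Finset.mem_singleton]
          simp_all
    · rw [EkF, if_neg h]
      simp only [Finset.notMem_empty, false_iff]
      rintro ⟨h1, h2, h3⟩
      match l, h1 with
      | [x], _ => simp_all
  | succ k ih =>
    intro a v l
    simp only [EkF, Finset.mem_biUnion, Finset.mem_image, Finset.mem_univ, true_and]
    constructor
    · rintro ⟨x, l', hl', rfl⟩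
      rw [ih] at hl'
      obtain ⟨h1, h2, h3⟩ := hl'
      have hne : l' ≠ [] := by intro h; subst h; simp at h1
      refine ⟨by simp [h1], rfl, ?_⟩
      simp [List.getLast?_cons, h3]
    · rintro ⟨h1, h2, h3⟩
      match l with
      | b :: l' =>
        have hb : b = a := by simpa using h2
        subst hb
        have hne : l' ≠ [] := by
          intro h; subst h; simp at h1
        refine ⟨l'.head hne, l', ?_, rfl⟩
        rw [ih]
        refine ⟨by simpa using h1, List.head?_eq_head hne, ?_⟩
        cases l' with
        | nil => exact absurd rfl hne
        | cons c t => rwa [List.getLast?_cons_cons] at h3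

lemma edgeProd_singleton (Λ : Matrix V V ℝ) (x : V) : edgeProd Λ [x] = 1 := by
  simp [edgeProd]

lemma edgeProd_cons_cons (Λ : Matrix V V ℝ) (a x : V) (t : List V) :
    edgeProd Λ (a :: x :: t) = Λ a x * edgeProd Λ (x :: t) := by
  simp [edgeProd]

lemma edgeProd_cons (Λ : Matrix V V ℝ) (a x : V) {l : List V} (h : l.head? = some x) :
    edgeProd Λ (a :: l) = Λ a x * edgeProd Λ l := by
  cases l with
  | nil => simp at h
  | cons y t =>
    have hy : x = y := by simpa using h.symm
    subst hy
    exact edgeProd_cons_cons Λ a x t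

variable (G : MixedGraph V)

lemma chain'_of_edgeProd_ne (Λ : Matrix V V ℝ)
    (hΛ : ∀ v w, (v, w) ∉ G.D → Λ v w = 0) :
    ∀ l : List V, edgeProd Λ l ≠ 0 → l.Chain' fun a b => (a, b) ∈ G.D := by
  intro l
  induction l with
  | nil => intro _; exact List.isChain_nil
  | cons a t ih =>
    match t with
    | [] => intro _; exact List.isChain_singleton _
    | x :: t' =>
      intro h
      rw [edgeProd_cons_cons] at h
      have h1 : Λ a x ≠ 0 := fun hz => h (by rw [hz, zero_mul])
      have h2 : edgeProd Λ (x :: t') ≠ 0 := fun hz => h (by rw [hz, mul_zero])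
      have hD : (a, x) ∈ G.D := by
        by_contra hD; exact h1 (hΛ _ _ hD)
      exact List.IsChain.cons_cons hD (ih h2)

/-- rank of a vertex: number of strict ancestors. -/
noncomputable def rnk (v : V) : ℕ :=
  (Finset.univ.filter fun u => Relation.TransGen (fun a b => (a, b) ∈ G.D) u v).card

variable {G}

lemma rnk_lt (hacyclic : G.Acyclic) {a b : V} (hab : (a, b) ∈ G.D) : G.rnk a < G.rnk b := by
  apply Finset.card_lt_card
  constructor
  · intro u hu
    simp only [Finset.mem_filter, Finset.mem_univ, true_and] at hu ⊢
    exact hu.tail hab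
  · intro hsub
    have ha : a ∈ Finset.univ.filter fun u =>
        Relation.TransGen (fun x y => (x, y) ∈ G.D) u b := by
      simp only [Finset.mem_filter, Finset.mem_univ, true_and]
      exact Relation.TransGen.single hab
    have := hsub ha
    simp only [Finset.mem_filter, Finset.mem_univ, true_and] at this
    exact hacyclic a this

lemma rnk_lt_card (hacyclic : G.Acyclic) (v : V) : G.rnk v < Fintype.card V := by
  rw [← Finset.card_univ]
  apply Finset.card_lt_card
  constructor
  · exact Finset.filter_subset _ _
  · intro hsub
    have := hsub (Finset.mem_univ v)
    simp only [Finset.mem_filter, Finset.mem_univ, true_and] at this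
    exact hacyclic v this

lemma pow_apply_rnk (hacyclic : G.Acyclic) (Λ : Matrix V V ℝ)
    (hΛ : ∀ v w, (v, w) ∉ G.D → Λ v w = 0) :
    ∀ (k : ℕ) (a b : V), (Λ ^ k) a b ≠ 0 → G.rnk a + k ≤ G.rnk b := by
  intro k
  induction k with
  | zero =>
    intro a b h
    simp only [pow_zero] at h
    have : a = b := by
      by_contra hne
      exact h (Matrix.one_apply_ne hne)
    subst this; omega
  | succ k ih =>
    intro a b h
    rw [pow_succ', Matrix.mul_apply] at h
    obtain ⟨x, hx⟩ := Finset.exists_ne_zero_of_sum_ne_zero h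
    have h1 : Λ a x ≠ 0 := fun hz => hx.2 (by rw [hz, zero_mul])
    have h2 : (Λ ^ k) x b ≠ 0 := fun hz => hx.2 (by rw [hz, mul_zero])
    have hD : (a, x) ∈ G.D := by by_contra hD; exact h1 (hΛ _ _ hD)
    have := rnk_lt hacyclic hD
    have := ih x b h2
    omega

lemma pow_card_eq_zero (hacyclic : G.Acyclic) (Λ : Matrix V V ℝ)
    (hΛ : ∀ v w, (v, w) ∉ G.D → Λ v w = 0) :
    Λ ^ Fintype.card V = 0 := by
  ext a b
  by_contra h
  have h1 := pow_apply_rnk hacyclic Λ hΛ (Fintype.card V) a b h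
  have h2 := rnk_lt_card hacyclic b
  omega

lemma isUnit_one_sub (hacyclic : G.Acyclic) (Λ : Matrix V V ℝ)
    (hΛ : ∀ v w, (v, w) ∉ G.D → Λ v w = 0) : IsUnit (1 - Λ) :=
  IsNilpotent.isUnit_one_sub ⟨Fintype.card V, pow_card_eq_zero hacyclic Λ hΛ⟩

lemma geom_mul_one_sub (Λ : Matrix V V ℝ) (n : ℕ) :
    (∑ i ∈ Finset.range n, Λ ^ i) * (1 - Λ) = 1 - Λ ^ n := by
  induction n with
  | zero => simp
  | succ n ih =>
    rw [Finset.sum_range_succ, add_mul, ih, mul_sub, mul_one, pow_succ]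
    abel

lemma inv_one_sub_eq (hacyclic : G.Acyclic) (Λ : Matrix V V ℝ)
    (hΛ : ∀ v w, (v, w) ∉ G.D → Λ v w = 0) :
    (1 - Λ)⁻¹ = ∑ i ∈ Finset.range (Fintype.card V), Λ ^ i := by
  apply Matrix.inv_eq_left_inv
  rw [geom_mul_one_sub, pow_card_eq_zero hacyclic Λ hΛ, sub_zero]

lemma pow_apply_eq_sum (Λ : Matrix V V ℝ) :
    ∀ (k : ℕ) (a v : V), (Λ ^ k) a v = ∑ l ∈ EkF k a v, edgeProd Λ l := by
  intro k
  induction k with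
  | zero =>
    intro a v
    by_cases h : a = v
    · subst h
      simp [EkF, Matrix.one_apply_eq, edgeProd_singleton]
    · simp [EkF, Matrix.one_apply_ne h, h]
  | succ k ih =>
    intro a v
    rw [pow_succ', Matrix.mul_apply]
    show _ = ∑ l ∈ Finset.univ.biUnion fun x => (EkF k x v).image fun l => a :: l, _
    rw [Finset.sum_biUnion]
    · apply Finset.sum_congr rfl
      intro x _
      rw [Finset.sum_image]
      · rw [ih, Finset.mul_sum]
        apply Finset.sum_congr rfl
        intro l hl
        rw [mem_EkF] at hl
        rw [edgeProd_cons Λ a x hl.2.1]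
      · intro l1 _ l2 _ h
        simpa using h
    · intro x _ y _ hxy
      simp only [Function.onFun]
      rw [Finset.disjoint_left]
      intro l hl1 hl2
      simp only [Finset.mem_image] at hl1 hl2
      obtain ⟨l1, hl1, rfl⟩ := hl1
      obtain ⟨l2, hl2, he⟩ := hl2
      rw [mem_EkF] at hl1 hl2
      have hll : l2 = l1 := by simpa using he
      subst hll
      exact hxy (by rw [hl1.2.1] at hl2; simpa using hl2.2.1)

/-- Paths (of any positive length ≤ card V) from `a` to `v`. -/
def PathF (a v : V) : Finset (List V) :=
  (Finset.range (Fintype.card V)).biUnion fun k => EkF k a v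

lemma mem_PathF {a v : V} {l : List V} :
    l ∈ PathF a v ↔ 1 ≤ l.length ∧ l.length ≤ Fintype.card V ∧
      l.head? = some a ∧ l.getLast? = some v := by
  simp only [PathF, Finset.mem_biUnion, Finset.mem_range, mem_EkF]
  constructor
  · rintro ⟨k, hk, h1, h2, h3⟩
    exact ⟨by omega, by omega, h2, h3⟩
  · rintro ⟨h1, h2, h3, h4⟩
    exact ⟨l.length - 1, by omega, by omega, h3, h4⟩

lemma inv_one_sub_apply (hacyclic : G.Acyclic) (Λ : Matrix V V ℝ)
    (hΛ : ∀ v w, (v, w) ∉ G.D → Λ v w = 0) (a v : V) :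
    (1 - Λ)⁻¹ a v = ∑ l ∈ PathF a v, edgeProd Λ l := by
  rw [inv_one_sub_eq hacyclic Λ hΛ, Matrix.sum_apply]
  unfold PathF
  rw [Finset.sum_biUnion]
  · exact Finset.sum_congr rfl fun k _ => pow_apply_eq_sum Λ k a v
  · intro i hi j hj hij
    simp only [Function.onFun]
    rw [Finset.disjoint_left]
    intro l hl1 hl2
    rw [mem_EkF] at hl1 hl2
    exact hij (by omega)

/-- All paths into `v`. -/
def AllP (v : V) : Finset (List V) :=
  Finset.univ.biUnion fun a => PathF a v

lemma mem_AllP {v : V} {l : List V} :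
    l ∈ AllP v ↔ 1 ≤ l.length ∧ l.length ≤ Fintype.card V ∧ l.getLast? = some v := by
  simp only [AllP, Finset.mem_biUnion, Finset.mem_univ, true_and, mem_PathF]
  constructor
  · rintro ⟨a, h⟩; exact ⟨h.1, h.2.1, h.2.2.2⟩
  · rintro ⟨h1, h2, h3⟩
    have hne : l ≠ [] := by intro h; subst h; simp at h1
    exact ⟨l.head hne, h1, h2, List.head?_eq_head hne, h3⟩

lemma sum_AllP (v d : V) (F : V → List V → ℝ) :
    ∑ a, ∑ l ∈ PathF a v, F a l = ∑ l ∈ AllP v, F (l.head?.getD d) l := by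
  unfold AllP
  rw [Finset.sum_biUnion]
  · apply Finset.sum_congr rfl
    intro a _
    apply Finset.sum_congr rfl
    intro l hl
    rw [mem_PathF] at hl
    rw [hl.2.2.1]
    rfl
  · intro a _ b _ hab
    simp only [Function.onFun]
    rw [Finset.disjoint_left]
    intro l hl1 hl2
    rw [mem_PathF] at hl1 hl2
    rw [hl1.2.2.1] at hl2
    exact hab (by simpa using hl2.2.2.1)

lemma chain'_length_le (hacyclic : G.Acyclic) {l : List V}
    (hl : l.Chain' fun a b => (a, b) ∈ G.D) : l.length ≤ Fintype.card V := by
  have htrans : l.Chain' (Relation.TransGen fun a b => (a, b) ∈ G.D) :=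
    List.IsChain.imp (fun a b h => Relation.TransGen.single h) hl
  have hpw : l.Pairwise (Relation.TransGen fun a b => (a, b) ∈ G.D) := by
    rw [← List.isChain_iff_pairwise (R := Relation.TransGen fun a b => (a, b) ∈ G.D)
      (l := l)]
    exact htrans
  have hnd : l.Nodup := hpw.imp fun {a b} h => by
    rintro rfl; exact hacyclic a h
  exact hnd.length_le_card

lemma Trek.ext' {π π' : G.Trek} (hl : π.left = π'.left) (hr : π.right = π'.right) :
    π = π' := by
  obtain ⟨l, r, lne, rne, b, lc, rc, hc⟩ := π
  obtain ⟨l', r', lne', rne', b', lc', rc', hc'⟩ := π'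
  simp only at hl hr
  subst hl; subst hr
  have hb : b = b' := by
    cases b <;> cases b' <;> try rfl
    · -- b = false, b' = true
      exfalso
      simp only [if_neg (by simp : ¬(false = true)), if_pos (by simp : (true = true))]
        at hc hc'
      have hc'' : (l.head lne, r.head rne) ∈ G.B := hc'
      rw [hc] at hc''
      exact G.B_irrefl _ hc''
    · -- b = true, b' = false
      exfalso
      simp only [if_neg (by simp : ¬(false = true)), if_pos (by simp : (true = true))]
        at hc hc'
      have hc'' : (l.head lne, r.head rne) ∈ G.B := hc
      rw [hc'] at hc''
      exact G.B_irrefl _ hc''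
  subst hb
  rfl

lemma trek_set_finite (hacyclic : G.Acyclic) (v w : V) :
    {π : G.Trek | π.source = v ∧ π.target = w}.Finite := by
  apply Set.Finite.of_finite_image (f := fun π : G.Trek => (π.left, π.right))
  · apply Set.Finite.subset (Finset.finite_toSet (AllP (V := V) v ×ˢ AllP w))
    rintro ⟨l, r⟩ ⟨π, ⟨hs, ht⟩, heq⟩
    rw [Prod.ext_iff] at heq
    obtain ⟨hl, hr⟩ := heq
    dsimp only at hl hr
    subst hl; subst hr
    simp only [Finset.coe_product, Set.mem_prod, Finset.mem_coe]
    constructor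
    · rw [mem_AllP]
      refine ⟨by cases hne : π.left with
        | nil => exact absurd hne π.left_ne
        | cons a t => simp [hne], chain'_length_le hacyclic π.left_chain, ?_⟩
      rw [List.getLast?_eq_getLast_of_ne_nil π.left_ne]
      exact congrArg some hs
    · rw [mem_AllP]
      refine ⟨by cases hne : π.right with
        | nil => exact absurd hne π.right_ne
        | cons a t => simp [hne], chain'_length_le hacyclic π.right_chain, ?_⟩
      rw [List.getLast?_eq_getLast_of_ne_nil π.right_ne]
      exact congrArg some ht
  · intro π _ π' _ h
    rw [Prod.ext_iff] at h
    exact Trek.ext' h.1 h.2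

end MixedGraph

end TrekRuleAux
section TrekRuleAux2

namespace MixedGraph

variable {V : Type*} [Fintype V] [DecidableEq V]

lemma head_getD {l : List V} (h : l ≠ []) (d : V) : l.head?.getD d = l.head h := by
  rw [List.head?_eq_head h]; rfl

lemma getLast_of_getLast? {l : List V} {v : V} (h : l ≠ []) (hl : l.getLast? = some v) :
    l.getLast h = v := by
  rw [List.getLast?_eq_getLast_of_ne_nil h] at hl
  exact Option.some.inj hl

lemma ne_nil_of_mem_AllP {v : V} {l : List V} (h : l ∈ AllP v) : l ≠ [] := by
  rw [mem_AllP] at h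
  intro hn; subst hn; simp at h

/-- Constructing a trek from two directed paths whose heads agree or are siblings. -/
def mkTrek (G : MixedGraph V) (l r : List V) (hl : l ≠ []) (hr : r ≠ [])
    (cl : l.Chain' fun a b => (a, b) ∈ G.D) (cr : r.Chain' fun a b => (a, b) ∈ G.D)
    (hc : l.head hl = r.head hr ∨ (l.head hl, r.head hr) ∈ G.B) : G.Trek where
  left := l
  right := r
  left_ne := hl
  right_ne := hr
  hasBidir := decide ((l.head hl, r.head hr) ∈ G.B)
  left_chain := cl
  right_chain := cr
  head_cond := by
    split
    next hB => exact of_decide_eq_true hB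
    next hB => exact hc.resolve_right fun h => hB (decide_eq_true h)

@[simp] lemma mkTrek_left (G : MixedGraph V) (l r : List V) (hl hr cl cr hc) :
    (mkTrek G l r hl hr cl cr hc).left = l := rfl

@[simp] lemma mkTrek_right (G : MixedGraph V) (l r : List V) (hl hr cl cr hc) :
    (mkTrek G l r hl hr cl cr hc).right = r := rfl

variable {G : MixedGraph V}

/-- The pairs of lists that correspond to treks. -/
def GoodPair (G : MixedGraph V) (v w : V) (p : List V × List V) : Prop :=
  (p.1.Chain' fun a b => (a, b) ∈ G.D) ∧ (p.2.Chain' fun a b => (a, b) ∈ G.D) ∧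
    (p.1.head?.getD v = p.2.head?.getD w ∨ (p.1.head?.getD v, p.2.head?.getD w) ∈ G.B)

lemma trek_sum_eq (hacyclic : G.Acyclic) (Λ Ω : Matrix V V ℝ)
    (hΛ : ∀ v w, (v, w) ∉ G.D → Λ v w = 0)
    (hΩ : ∀ v w, v ≠ w → (v, w) ∉ G.B → Ω v w = 0) (v w : V) :
    ∑ p ∈ AllP v ×ˢ AllP w,
        Ω (p.1.head?.getD v) (p.2.head?.getD w) * (edgeProd Λ p.1 * edgeProd Λ p.2)
      = ∑ π ∈ (trek_set_finite hacyclic v w).toFinset, π.monomial Λ Ω := by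
  rw [← Finset.sum_filter_of_ne (p := GoodPair G v w)
    (f := fun p => Ω (p.1.head?.getD v) (p.2.head?.getD w) *
      (edgeProd Λ p.1 * edgeProd Λ p.2))]
  · refine Finset.sum_bij'
      (fun p hp => G.mkTrek p.1 p.2
        (ne_nil_of_mem_AllP (Finset.mem_product.mp (Finset.mem_filter.mp hp).1).1)
        (ne_nil_of_mem_AllP (Finset.mem_product.mp (Finset.mem_filter.mp hp).1).2)
        (Finset.mem_filter.mp hp).2.1
        (Finset.mem_filter.mp hp).2.2.1
        (by
          have h1 := ne_nil_of_mem_AllP (Finset.mem_product.mp (Finset.mem_filter.mp hp).1).1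
          have h2 := ne_nil_of_mem_AllP (Finset.mem_product.mp (Finset.mem_filter.mp hp).1).2
          have := (Finset.mem_filter.mp hp).2.2.2
          rwa [head_getD h1 v, head_getD h2 w] at this))
      (fun π _ => (π.left, π.right)) ?_ ?_ ?_ ?_ ?_
    · -- hi : lands in trek finset
      intro p hp
      rw [Set.Finite.mem_toFinset]
      have h1 := ne_nil_of_mem_AllP (Finset.mem_product.mp (Finset.mem_filter.mp hp).1).1
      have h2 := ne_nil_of_mem_AllP (Finset.mem_product.mp (Finset.mem_filter.mp hp).1).2
      have hm1 := (Finset.mem_product.mp (Finset.mem_filter.mp hp).1).1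
      have hm2 := (Finset.mem_product.mp (Finset.mem_filter.mp hp).1).2
      rw [mem_AllP] at hm1 hm2
      constructor
      · exact getLast_of_getLast? h1 hm1.2.2
      · exact getLast_of_getLast? h2 hm2.2.2
    · -- hj : reverse lands in filtered product
      intro π hπ
      rw [Set.Finite.mem_toFinset] at hπ
      rw [Finset.mem_filter, Finset.mem_product]
      refine ⟨⟨?_, ?_⟩, π.left_chain, π.right_chain, ?_⟩
      · rw [mem_AllP]
        refine ⟨?_, chain'_length_le hacyclic π.left_chain, ?_⟩
        · have := π.left_ne
          cases hne : π.left with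
          | nil => exact absurd hne this
          | cons a t => simp [hne]
        · rw [List.getLast?_eq_getLast_of_ne_nil π.left_ne]
          exact congrArg some hπ.1
      · rw [mem_AllP]
        refine ⟨?_, chain'_length_le hacyclic π.right_chain, ?_⟩
        · have := π.right_ne
          cases hne : π.right with
          | nil => exact absurd hne this
          | cons a t => simp [hne]
        · rw [List.getLast?_eq_getLast_of_ne_nil π.right_ne]
          exact congrArg some hπ.2
      · rw [head_getD π.left_ne v, head_getD π.right_ne w]
        have hc := π.head_cond
        cases hB : π.hasBidir with
        | false => rw [hB] at hc; simp only [Bool.false_eq_true, if_false] at hc; exact Or.inl hc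
        | true => rw [hB] at hc; simp only [if_true] at hc; exact Or.inr hc
    · -- left_inv
      intro p hp
      rfl
    · -- right_inv
      intro π hπ
      exact Trek.ext' rfl rfl
    · -- values agree
      intro p hp
      have h1 := ne_nil_of_mem_AllP (Finset.mem_product.mp (Finset.mem_filter.mp hp).1).1
      have h2 := ne_nil_of_mem_AllP (Finset.mem_product.mp (Finset.mem_filter.mp hp).1).2
      unfold Trek.monomial
      simp only [mkTrek_left, mkTrek_right]
      conv_lhs => rw [head_getD h1 v, head_getD h2 w]
      ring
  · -- nonzero terms are good pairs
    intro p _ hne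
    have hΩne : Ω (p.1.head?.getD v) (p.2.head?.getD w) ≠ 0 :=
      fun h => hne (by rw [h, zero_mul])
    have he1 : edgeProd Λ p.1 ≠ 0 := fun h => hne (by rw [h]; ring)
    have he2 : edgeProd Λ p.2 ≠ 0 := fun h => hne (by rw [h]; ring)
    refine ⟨chain'_of_edgeProd_ne G Λ hΛ _ he1, chain'_of_edgeProd_ne G Λ hΛ _ he2, ?_⟩
    by_contra hcon
    push_neg at hcon
    exact hΩne (hΩ _ _ hcon.1 hcon.2)

end MixedGraph

end TrekRuleAux2
/-- **Trek rule**: for an acyclic mixed graph, `I - Λ` is invertible and each entry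
`Σ_{v,w}` of `Σ = (I-Λ)^{-T} Ω (I-Λ)^{-1}` is the sum of the trek monomials over all treks
from `v` to `w`. -/
theorem trek_rule {V : Type*} [Fintype V] [DecidableEq V] (G : MixedGraph V)
    (hacyclic : G.Acyclic) (Λ Ω : Matrix V V ℝ)
    (hΛ : ∀ v w, (v, w) ∉ G.D → Λ v w = 0)
    (hΩsymm : Ω.IsSymm) (hΩ : ∀ v w, v ≠ w → (v, w) ∉ G.B → Ω v w = 0) :
    IsUnit (1 - Λ).det ∧
    ∀ v w : V, MixedGraph.phi Λ Ω v w =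
      ∑ᶠ π ∈ {π : G.Trek | π.source = v ∧ π.target = w}, π.monomial Λ Ω := by

  constructor
  · exact (Matrix.isUnit_iff_isUnit_det _).mp (MixedGraph.isUnit_one_sub hacyclic Λ hΛ)
  intro v w
  have hfin := MixedGraph.trek_set_finite hacyclic v w
  rw [finsum_mem_eq_finite_toFinset_sum _ hfin]
  rw [← MixedGraph.trek_sum_eq hacyclic Λ Ω hΛ hΩ v w]
  -- expand phi
  have hphi : MixedGraph.phi Λ Ω v w
      = ∑ a, ∑ b, (1 - Λ)⁻¹ a v * Ω a b * (1 - Λ)⁻¹ b w := by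
    unfold MixedGraph.phi
    rw [Matrix.mul_apply]
    simp_rw [Matrix.mul_apply, Matrix.transpose_apply, Finset.sum_mul]
    rw [Finset.sum_comm]
  rw [hphi]
  simp_rw [MixedGraph.inv_one_sub_apply hacyclic Λ hΛ]
  have hstep : ∀ a b : V,
      (∑ l ∈ MixedGraph.PathF a v, MixedGraph.edgeProd Λ l) * Ω a b *
        (∑ l' ∈ MixedGraph.PathF b w, MixedGraph.edgeProd Λ l')
      = ∑ l ∈ MixedGraph.PathF a v, ∑ l' ∈ MixedGraph.PathF b w,
          Ω a b * (MixedGraph.edgeProd Λ l * MixedGraph.edgeProd Λ l') := by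
    intro a b
    rw [Finset.sum_mul, Finset.sum_mul]
    apply Finset.sum_congr rfl
    intro l _
    rw [Finset.mul_sum]
    apply Finset.sum_congr rfl
    intro l' _
    ring
  simp_rw [hstep]
  -- swap the b-sum and the l-sum, then collapse using sum_AllP
  have hswap : ∀ a : V,
      ∑ b, ∑ l ∈ MixedGraph.PathF a v, ∑ l' ∈ MixedGraph.PathF b w,
          Ω a b * (MixedGraph.edgeProd Λ l * MixedGraph.edgeProd Λ l')
      = ∑ l ∈ MixedGraph.PathF a v, ∑ b, ∑ l' ∈ MixedGraph.PathF b w,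
          Ω a b * (MixedGraph.edgeProd Λ l * MixedGraph.edgeProd Λ l') := by
    intro a; exact Finset.sum_comm
  simp_rw [hswap]
  rw [MixedGraph.sum_AllP v v (fun a l => ∑ b, ∑ l' ∈ MixedGraph.PathF b w,
      Ω a b * (MixedGraph.edgeProd Λ l * MixedGraph.edgeProd Λ l'))]
  rw [Finset.sum_product]
  apply Finset.sum_congr rfl
  intro l _
  exact MixedGraph.sum_AllP w w (fun b l' =>
    Ω (l.head?.getD v) b * (MixedGraph.edgeProd Λ l * MixedGraph.edgeProd Λ l'))
end

section
/- Let (V,D) be a directed graph on m nodes and let W,P⊆V with |W|=|P|=n. If there exists a real m×m matrix Λ with λ_vw=0 whenever v→w∉D and I−Λ invertible such that the n×n submatrix ((I−Λ)^{−1})_{W,P} has nonzero determinant, then there exist an enumeration W={w_1,…,w_n}, P={p_1,…,p_n} and directed paths ψ_1,…,ψ_n in (V,D), where ψ_i goes from w_i to p_i, such that the ψ_i have no self-intersections and are pairwise vertex-disjoint. -/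
open scoped Classical Matrix

theorem la_part {V : Type*} [Fintype V] [DecidableEq V]
    (D : Finset (V × V))
    (n : ℕ) (W P : Finset V) (hW : W.card = n) (hP : P.card = n)
    (Λ : Matrix V V ℝ) (w p : Fin n → V)
    (hsupp : ∀ v u, (v, u) ∉ D → Λ v u = 0) (hunit : IsUnit (1 - Λ).det)
    (hwinj : Function.Injective w) (hpinj : Function.Injective p)
    (hwW : Finset.univ.image w = W) (hpP : Finset.univ.image p = P)
    (hdet : (Matrix.of fun i j : Fin n => (1 - Λ)⁻¹ (w i) (p j)).det ≠ 0) :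
    ∃ F : {x // x ∈ Pᶜ} ≃ {x // x ∈ Wᶜ},
      ∀ v : {x // x ∈ Pᶜ}, (v : V) = (F v : V) ∨ ((v : V), (F v : V)) ∈ D := by
  set A : Matrix V V ℝ := 1 - Λ with hA
  have hwmem : ∀ i, w i ∈ W := by
    intro i; rw [← hwW]; exact Finset.mem_image_of_mem w (Finset.mem_univ i)
  have hpmem : ∀ i, p i ∈ P := by
    intro i; rw [← hpP]; exact Finset.mem_image_of_mem p (Finset.mem_univ i)
  have hnV : n ≤ Fintype.card V := by rw [← hW]; exact Finset.card_le_univ W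
  have hcardP : Fintype.card {x // x ∈ Pᶜ} = Fintype.card V - n := by
    simp [Finset.card_compl, hP]
  have hcardW : Fintype.card {x // x ∈ Wᶜ} = Fintype.card V - n := by
    simp [Finset.card_compl, hW]
  have ε : {x // x ∈ Pᶜ} ≃ {x // x ∈ Wᶜ} := Fintype.equivOfCardEq (by rw [hcardP, hcardW])
  -- the two enumerations of V
  have hePbij : Function.Bijective (Sum.elim p (Subtype.val : {x // x ∈ Pᶜ} → V)) := by
    rw [Fintype.bijective_iff_injective_and_card]
    constructor
    · rintro (i | u) (j | u') hij
      · exact congrArg Sum.inl (hpinj hij)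
      · simp only [Sum.elim_inl, Sum.elim_inr] at hij
        exact absurd (show (u' : V) ∈ P from hij ▸ hpmem i) (Finset.mem_compl.1 u'.2)
      · simp only [Sum.elim_inl, Sum.elim_inr] at hij
        exact absurd (show (u : V) ∈ P from hij ▸ hpmem j) (Finset.mem_compl.1 u.2)
      · exact congrArg Sum.inr (Subtype.ext hij)
    · simp [hcardP]; omega
  have heWbij : Function.Bijective (Sum.elim w (fun u : {x // x ∈ Pᶜ} => ((ε u : {x // x ∈ Wᶜ}) : V))) := by
    rw [Fintype.bijective_iff_injective_and_card]
    constructor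
    · rintro (i | u) (j | u') hij
      · exact congrArg Sum.inl (hwinj hij)
      · simp only [Sum.elim_inl, Sum.elim_inr] at hij
        exact absurd (show ((ε u' : {x // x ∈ Wᶜ}) : V) ∈ W from hij ▸ hwmem i)
          (Finset.mem_compl.1 (ε u').2)
      · simp only [Sum.elim_inl, Sum.elim_inr] at hij
        exact absurd (show ((ε u : {x // x ∈ Wᶜ}) : V) ∈ W from hij ▸ hwmem j)
          (Finset.mem_compl.1 (ε u).2)
      · exact congrArg Sum.inr (ε.injective (Subtype.ext hij))
    · simp [hcardP]; omega
  set eP : (Fin n ⊕ {x // x ∈ Pᶜ}) ≃ V := Equiv.ofBijective _ hePbij with heP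
  set eW' : (Fin n ⊕ {x // x ∈ Pᶜ}) ≃ V := Equiv.ofBijective _ heWbij with heW'
  have hePl : ∀ i, eP (Sum.inl i) = p i := fun i => rfl
  have hePr : ∀ u, eP (Sum.inr u) = (u : V) := fun u => rfl
  have heWl : ∀ i, eW' (Sum.inl i) = w i := fun i => rfl
  have heWr : ∀ u, eW' (Sum.inr u) = ((ε u : {x // x ∈ Wᶜ}) : V) := fun u => rfl
  set N : Matrix V (Fin n ⊕ {x // x ∈ Pᶜ}) ℝ :=
    fun v j => Sum.elim (fun i => if v = p i then (1 : ℝ) else 0)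
      (fun u => A v ((ε u : {x // x ∈ Wᶜ}) : V)) j with hN
  set Q : Matrix {x // x ∈ Pᶜ} {x // x ∈ Pᶜ} ℝ :=
    fun u u' => A (u : V) ((ε u' : {x // x ∈ Wᶜ}) : V) with hQ
  -- N₁ is block triangular
  have hN₁ : N.submatrix eP _root_.id =
      Matrix.fromBlocks 1 (fun i u' => A (p i) ((ε u' : {x // x ∈ Wᶜ}) : V)) 0 Q := by
    ext x y
    rcases x with i | u <;> rcases y with j | u'
    · erw [Matrix.fromBlocks_apply₁₁, Matrix.submatrix_apply]
      simp only [Matrix.submatrix_apply, _root_.id, hePl, hN, Sum.elim_inl,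
        Matrix.fromBlocks_apply₁₁, Matrix.one_apply]
      by_cases hij : i = j
      · simp [hij]
      · rw [if_neg hij, if_neg (fun hc => hij (hpinj hc))]
    · rfl
    · erw [Matrix.fromBlocks_apply₂₁, Matrix.submatrix_apply]
      simp only [Matrix.submatrix_apply, _root_.id, hePr, hN, Sum.elim_inl,
        Matrix.fromBlocks_apply₂₁, Matrix.zero_apply]
      rw [if_neg]
      intro hc
      exact (Finset.mem_compl.1 u.2) (hc ▸ hpmem j)
    · rfl
  -- N₂ is block triangular
  have hinv : A⁻¹ * A = 1 := Matrix.nonsing_inv_mul A hunit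
  have hN₂ : (A⁻¹ * N).submatrix eW' _root_.id =
      Matrix.fromBlocks (Matrix.of fun i j : Fin n => A⁻¹ (w i) (p j)) 0
        (fun u j => A⁻¹ ((ε u : {x // x ∈ Wᶜ}) : V) (p j)) 1 := by
    have hcol1 : ∀ (a : V) (j : Fin n), (A⁻¹ * N) a (Sum.inl j) = A⁻¹ a (p j) := by
      intro a j
      rw [Matrix.mul_apply]
      simp [hN, mul_ite]
    have hcol2 : ∀ (a : V) (u' : {x // x ∈ Pᶜ}),
        (A⁻¹ * N) a (Sum.inr u') = if a = ((ε u' : {x // x ∈ Wᶜ}) : V) then 1 else 0 := by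
      intro a u'
      have : (A⁻¹ * N) a (Sum.inr u') = (A⁻¹ * A) a ((ε u' : {x // x ∈ Wᶜ}) : V) := by
        rw [Matrix.mul_apply, Matrix.mul_apply]
        simp [hN]
      rw [this, hinv, Matrix.one_apply]
    ext x y
    rcases x with i | u <;> rcases y with j | u'
    · erw [Matrix.fromBlocks_apply₁₁]
      simp [Matrix.submatrix_apply, heWl, hcol1]
    · erw [Matrix.fromBlocks_apply₁₂]
      simp only [Matrix.submatrix_apply, _root_.id, heWl, hcol2,
        Matrix.fromBlocks_apply₁₂, Matrix.zero_apply]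
      rw [if_neg]
      intro hc
      exact (Finset.mem_compl.1 (ε u').2) (hc ▸ hwmem i)
    · erw [Matrix.fromBlocks_apply₂₁]
      simp [Matrix.submatrix_apply, heWr, hcol1]
    · erw [Matrix.fromBlocks_apply₂₂]
      simp only [Matrix.submatrix_apply, _root_.id, heWr, hcol2,
        Matrix.fromBlocks_apply₂₂, Matrix.one_apply]
      by_cases huu : u = u'
      · simp [huu]
      · rw [if_neg huu, if_neg]
        intro hc
        exact huu (ε.injective (Subtype.ext hc))
  -- determinant chain
  have hmul : A⁻¹.submatrix ⇑eW' ⇑eP * N.submatrix ⇑eP _root_.id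
      = (A⁻¹ * N).submatrix ⇑eW' _root_.id := Matrix.submatrix_mul_equiv _ _ _ eP _
  have hdet₂ : ((A⁻¹ * N).submatrix eW' _root_.id).det ≠ 0 := by
    rw [hN₂]
    erw [Matrix.det_fromBlocks_zero₁₂, Matrix.det_one, mul_one]
    exact hdet
  have hdet₁ : (N.submatrix eP _root_.id).det ≠ 0 := by
    intro h0
    apply hdet₂
    rw [← hmul, Matrix.det_mul, h0, mul_zero]
  have hQdet : Q.det ≠ 0 := by
    intro h0
    apply hdet₁
    rw [hN₁]
    erw [Matrix.det_fromBlocks_zero₂₁, Matrix.det_one, one_mul, h0]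
  -- extract a permutation with all factors nonzero
  have hperm : ∃ σ : Equiv.Perm {x // x ∈ Pᶜ}, ∏ u, Q (σ u) u ≠ 0 := by
    by_contra hcon
    push_neg at hcon
    apply hQdet
    rw [Matrix.det_apply]
    exact Finset.sum_eq_zero fun σ _ => by rw [hcon σ, smul_zero]
  obtain ⟨σ, hσ⟩ := hperm
  have hterm : ∀ u, Q (σ u) u ≠ 0 := by
    intro u h0
    exact hσ (Finset.prod_eq_zero (Finset.mem_univ u) h0)
  refine ⟨σ.symm.trans ε, ?_⟩
  intro v
  have h1 : Q (σ (σ.symm v)) (σ.symm v) ≠ 0 := hterm (σ.symm v)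
  rw [Equiv.apply_symm_apply] at h1
  have h2 : A (v : V) ((ε (σ.symm v) : {x // x ∈ Wᶜ}) : V) ≠ 0 := h1
  by_contra hcontra
  push_neg at hcontra
  obtain ⟨hne, hnD⟩ := hcontra
  have hne' : (v : V) ≠ ((ε (σ.symm v) : {x // x ∈ Wᶜ}) : V) := hne
  have hnD' : ((v : V), ((ε (σ.symm v) : {x // x ∈ Wᶜ}) : V)) ∉ D := hnD
  apply h2
  rw [hA, Matrix.sub_apply, Matrix.one_apply_ne hne', hsupp _ _ hnD', sub_zero]

theorem comb_part {V : Type*} [Fintype V] [DecidableEq V]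
    (D : Finset (V × V))
    (n : ℕ) (W P : Finset V) (hP : P.card = n)
    (w : Fin n → V) (hw : Function.Injective w) (hwW : Finset.univ.image w = W)
    (F : {x // x ∈ Pᶜ} ≃ {x // x ∈ Wᶜ})
    (hF : ∀ v : {x // x ∈ Pᶜ}, (v : V) = (F v : V) ∨ ((v : V), (F v : V)) ∈ D) :
    ∃ (w' p : Fin n → V) (ψ : Fin n → List V),
      Function.Injective w' ∧ Function.Injective p ∧
      Finset.univ.image w' = W ∧ Finset.univ.image p = P ∧
      (∀ i, ψ i ≠ [] ∧ (ψ i).Chain' (fun a b => (a, b) ∈ D) ∧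
        (ψ i).head? = some (w' i) ∧ (ψ i).getLast? = some (p i) ∧ (ψ i).Nodup) ∧
      (∀ i j, i ≠ j → ∀ x ∈ ψ i, x ∉ ψ j) := by
  set f : V → V := fun v => if h : v ∈ Pᶜ then (F ⟨v, h⟩ : V) else v with hf
  have hf1 : ∀ v (h : v ∉ P), f v = (F ⟨v, Finset.mem_compl.2 h⟩ : V) := by
    intro v h; simp only [hf]; rw [dif_pos (Finset.mem_compl.2 h)]
  have hfW : ∀ v, v ∉ P → f v ∉ W := by
    intro v h
    rw [hf1 v h]
    exact Finset.mem_compl.1 (F ⟨v, Finset.mem_compl.2 h⟩).2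
  have hfinj : ∀ x y, x ∉ P → y ∉ P → f x = f y → x = y := by
    intro x y hx hy hxy
    rw [hf1 x hx, hf1 y hy] at hxy
    have := F.injective (Subtype.ext hxy)
    exact congrArg Subtype.val this
  have hwmem : ∀ i, w i ∈ W := by
    intro i; rw [← hwW]; exact Finset.mem_image_of_mem w (Finset.mem_univ i)
  -- distinctness along a chain before hitting P
  have L1 : ∀ (a : V), a ∈ W → ∀ (i j : ℕ), i < j → (∀ t, t < j → f^[t] a ∉ P) →
      f^[i] a ≠ f^[j] a := by
    intro a ha i
    induction i with
    | zero =>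
      intro j hij hnot
      obtain ⟨j', rfl⟩ : ∃ j', j = j' + 1 := ⟨j - 1, by omega⟩
      rw [Function.iterate_succ_apply']
      simp only [Function.iterate_zero_apply]
      intro hcontra
      exact hfW _ (hnot j' (by omega)) (by rw [← hcontra]; exact ha)
    | succ i ih =>
      intro j hij hnot
      obtain ⟨j', rfl⟩ := Nat.exists_eq_add_of_lt hij
      -- j = i + 1 + j' + 1
      rw [Function.iterate_succ_apply', show i + 1 + j' + 1 = (i + j' + 1) + 1 by omega,
        Function.iterate_succ_apply']
      intro hcontra
      have hx : f^[i] a ∉ P := hnot i (by omega)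
      have hy : f^[i + j' + 1] a ∉ P := hnot _ (by omega)
      have := hfinj _ _ hx hy hcontra
      exact ih (i + j' + 1) (by omega) (fun t ht => hnot t (by omega)) this
  -- termination
  have L2 : ∀ a : V, a ∈ W → ∃ k, f^[k] a ∈ P := by
    intro a ha
    by_contra hcon
    push_neg at hcon
    have hinj : Function.Injective (fun t : Fin (Fintype.card V + 1) => f^[(t : ℕ)] a) := by
      intro s t hst
      by_contra hne
      rcases Nat.lt_or_ge (s : ℕ) (t : ℕ) with hlt | hge
      · exact L1 a ha s t hlt (fun u _ => hcon u) hst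
      · have hlt : (t : ℕ) < (s : ℕ) := by
          rcases Nat.lt_or_ge (t : ℕ) (s : ℕ) with h' | h'
          · exact h'
          · exact absurd (Fin.ext (le_antisymm h' hge)) hne
        exact L1 a ha t s hlt (fun u _ => hcon u) hst.symm
    have := Fintype.card_le_of_injective _ hinj
    simp at this
  have hex : ∀ i : Fin n, ∃ k, f^[k] (w i) ∈ P := fun i => L2 (w i) (hwmem i)
  set Kmin : Fin n → ℕ := fun i => Nat.find (hex i) with hKmin
  have hKP : ∀ i, f^[Kmin i] (w i) ∈ P := fun i => Nat.find_spec (hex i)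
  have hKmin' : ∀ i t, t < Kmin i → f^[t] (w i) ∉ P := fun i t ht => Nat.find_min (hex i) ht
  -- cross-chain disjointness
  have L3 : ∀ i j : Fin n, i ≠ j → ∀ s t : ℕ, s ≤ Kmin i → t ≤ Kmin j →
      f^[s] (w i) ≠ f^[t] (w j) := by
    intro i j hij s
    induction s with
    | zero =>
      intro t _ ht
      cases t with
      | zero => simpa using fun hc => hij (hw hc)
      | succ t' =>
        rw [Function.iterate_succ_apply']
        intro hc
        exact hfW _ (hKmin' j t' (by omega)) (hc ▸ hwmem i)
    | succ s' ih =>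
      intro t hs ht
      cases t with
      | zero =>
        rw [Function.iterate_succ_apply']
        intro hc
        exact hfW _ (hKmin' i s' (by omega)) (hc.symm ▸ hwmem j)
      | succ t' =>
        rw [Function.iterate_succ_apply', Function.iterate_succ_apply']
        intro hc
        have hx : f^[s'] (w i) ∉ P := hKmin' i s' (by omega)
        have hy : f^[t'] (w j) ∉ P := hKmin' j t' (by omega)
        exact ih t' (by omega) (by omega) (hfinj _ _ hx hy hc)
  -- nodup within a chain (indices up to Kmin i)
  have L4 : ∀ i : Fin n, ∀ s t : ℕ, s < t → t ≤ Kmin i → f^[s] (w i) ≠ f^[t] (w i) := by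
    intro i s t hst ht
    rcases Nat.lt_or_ge t (Kmin i) with h' | h'
    · exact L1 (w i) (hwmem i) s t hst (fun u hu => hKmin' i u (by omega))
    · have : t = Kmin i := le_antisymm ht h'
      subst this
      intro hc
      exact hKmin' i s hst (hc ▸ hKP i)
  set ψ : Fin n → List V := fun i => (List.range (Kmin i + 1)).map (fun t => f^[t] (w i)) with hψ
  set p : Fin n → V := fun i => f^[Kmin i] (w i) with hp
  have hmemψ : ∀ i x, x ∈ ψ i ↔ ∃ t ≤ Kmin i, f^[t] (w i) = x := by
    intro i x
    simp only [hψ, List.mem_map, List.mem_range, Nat.lt_succ_iff]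
  have hdisj : ∀ i j, i ≠ j → ∀ x ∈ ψ i, x ∉ ψ j := by
    intro i j hij x hxi hxj
    rw [hmemψ] at hxi hxj
    obtain ⟨s, hs, rfl⟩ := hxi
    obtain ⟨t, ht, hst⟩ := hxj
    exact L3 i j hij s t hs ht hst.symm
  have hpinj : Function.Injective p := by
    intro i j hijp
    by_contra hij
    refine hdisj i j hij (p i) ?_ ?_
    · rw [hmemψ]; exact ⟨Kmin i, le_refl _, rfl⟩
    · rw [hmemψ]; exact ⟨Kmin j, le_refl _, hijp.symm⟩
  have hpP : Finset.univ.image p = P := by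
    apply Finset.eq_of_subset_of_card_le
    · intro x hx
      simp only [Finset.mem_image] at hx
      obtain ⟨i, _, rfl⟩ := hx
      exact hKP i
    · rw [hP, Finset.card_image_of_injective _ hpinj, Finset.card_univ, Fintype.card_fin]
  refine ⟨w, p, ψ, hw, hpinj, hwW, hpP, ?_, hdisj⟩
  intro i
  refine ⟨?_, ?_, ?_, ?_, ?_⟩
  · simp [hψ]
  · rw [hψ]
    simp only
    unfold List.Chain'
    rw [List.isChain_map, List.isChain_range_succ]
    intro t ht
    have hx : f^[t] (w i) ∉ P := hKmin' i t ht
    have hne : f^[t] (w i) ≠ f^[t + 1] (w i) := L4 i t (t+1) (by omega) (by omega)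
    rw [Function.iterate_succ_apply', hf1 _ hx] at *
    rcases hF ⟨f^[t] (w i), Finset.mem_compl.2 hx⟩ with heq | hD
    · exact absurd heq hne
    · exact hD
  · rw [hψ]
    simp only
    rw [List.range_succ_eq_map]
    simp
  · rw [hψ, hp]
    simp only
    rw [List.range_succ, List.map_append]
    simp
  · rw [hψ]
    refine List.Nodup.map_on ?_ List.nodup_range
    intro s hs t ht hst
    simp only [List.mem_range, Nat.lt_succ_iff] at hs ht
    by_contra hne
    rcases Nat.lt_or_ge s t with h' | h'
    · exact L4 i s t h' ht hst
    · have h'' : t < s := by omega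
      exact L4 i t s h'' hs hst.symm


/-- If `(V, D)` is a directed graph, `W, P ⊆ V` with `|W| = |P| = n`, and there is a matrix
`Λ` supported on `D` with `I - Λ` invertible such that the submatrix `((I-Λ)^{-1})_{W,P}`
has nonzero determinant, then there are enumerations `W = {w 1, …, w n}`,
`P = {p 1, …, p n}` and directed paths `ψ i` from `w i` to `p i` without
self-intersections that are pairwise vertex-disjoint. -/
theorem menger_from_determinant {V : Type*} [Fintype V] [DecidableEq V]
    (D : Finset (V × V)) (hD : ∀ v : V, (v, v) ∉ D)
    (n : ℕ) (W P : Finset V) (hW : W.card = n) (hP : P.card = n)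
    (h : ∃ (Λ : Matrix V V ℝ) (w p : Fin n → V),
      (∀ v u, (v, u) ∉ D → Λ v u = 0) ∧ IsUnit (1 - Λ).det ∧
      Function.Injective w ∧ Function.Injective p ∧
      Finset.univ.image w = W ∧ Finset.univ.image p = P ∧
      (Matrix.of fun i j : Fin n => (1 - Λ)⁻¹ (w i) (p j)).det ≠ 0) :
    ∃ (w p : Fin n → V) (ψ : Fin n → List V),
      Function.Injective w ∧ Function.Injective p ∧
      Finset.univ.image w = W ∧ Finset.univ.image p = P ∧
      (∀ i, ψ i ≠ [] ∧ (ψ i).Chain' (fun a b => (a, b) ∈ D) ∧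
        (ψ i).head? = some (w i) ∧ (ψ i).getLast? = some (p i) ∧ (ψ i).Nodup) ∧
      (∀ i j, i ≠ j → ∀ x ∈ ψ i, x ∉ ψ j) := by
  obtain ⟨Λ, w, p, hsupp, hunit, hwinj, hpinj, hwW, hpP, hdet⟩ := h
  obtain ⟨F, hF⟩ := la_part D n W P hW hP Λ w p hsupp hunit hwinj hpinj hwW hpP hdet
  exact comb_part D n W P hP w hwinj hwW F hF
end

section
/- Let G=(V,D,B) be a mixed graph, (Λ,Ω)∈Θ, and Σ=φ_G(Λ,Ω). Let v∈V and let Y={y_1,…,y_n}⊆V∖({v}∪sib(v)) with |Y|=|pa(v)|=n; write pa(v)={p_1,…,p_n}. Define the n×n matrix A by A_ij=[(I−Λ)^T Σ]_{y_i p_j} if y_i∈htr(v) and A_ij=Σ_{y_i p_j} if y_i∉htr(v), and the vector b∈ℝ^n by b_i=[(I−Λ)^T Σ]_{y_i v} if y_i∈htr(v) and b_i=Σ_{y_i v} if y_i∉htr(v). Then A·(λ_{p_1 v},…,λ_{p_n v})^T = b. -/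
open scoped Classical Matrix

section AuxLemmas

variable {V : Type*} [Fintype V] [DecidableEq V]

/-- Matrices supported on a reflexive transitive relation form a subalgebra. -/
def suppAlg (S : V → V → Prop) (hrefl : ∀ a, S a a)
    (htrans : ∀ a b c, S a b → S b c → S a c) : Subalgebra ℝ (Matrix V V ℝ) where
  carrier := {M | ∀ a b, ¬ S a b → M a b = 0}
  mul_mem' := by
    intro M N hM hN a b hab
    rw [Matrix.mul_apply]
    refine Finset.sum_eq_zero fun c _ => ?_
    by_cases h : S a c
    · rw [hN c b (fun h2 => hab (htrans _ _ _ h h2)), mul_zero]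
    · rw [hM a c h, zero_mul]
  one_mem' := by
    intro a b hab
    have hne : a ≠ b := by rintro rfl; exact hab (hrefl a)
    simp [Matrix.one_apply, hne]
  add_mem' := by intro M N hM hN a b hab; simp [hM a b hab, hN a b hab]
  zero_mem' := by intro a b hab; simp
  algebraMap_mem' := by
    intro r a b hab
    have hne : a ≠ b := by rintro rfl; exact hab (hrefl a)
    simp [Matrix.algebraMap_matrix_apply, hne]

set_option synthInstance.maxHeartbeats 1000000 in
lemma inv_mem_of_mem_subalgebra {A : Subalgebra ℝ (Matrix V V ℝ)} {x : Matrix V V ℝ}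
    (hx : x ∈ A) (hu : IsUnit x.det) : x⁻¹ ∈ A := by
  haveI : FiniteDimensional ℝ A := inferInstance
  have hinj : Function.Injective (LinearMap.mulLeft ℝ (⟨x, hx⟩ : A)) := by
    intro b c h
    have h' : x * (b : Matrix V V ℝ) = x * (c : Matrix V V ℝ) := by
      have := congrArg (Subtype.val : A → Matrix V V ℝ) h
      simpa [LinearMap.mulLeft_apply] using this
    ext1
    calc (b : Matrix V V ℝ) = (x⁻¹ * x) * b := by
          rw [Matrix.nonsing_inv_mul _ hu, Matrix.one_mul]
      _ = (x⁻¹ * x) * c := by rw [Matrix.mul_assoc, h', ← Matrix.mul_assoc]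
      _ = c := by rw [Matrix.nonsing_inv_mul _ hu, Matrix.one_mul]
  obtain ⟨z, hz⟩ := (LinearMap.injective_iff_surjective.mp hinj) 1
  have hxz : x * (z : Matrix V V ℝ) = 1 := by
    have := congrArg (Subtype.val : A → Matrix V V ℝ) hz
    simpa [LinearMap.mulLeft_apply] using this
  rw [Matrix.inv_eq_right_inv hxz]
  exact z.2

lemma chain_of_rtg {α : Type*} {R : α → α → Prop} {w z : α}
    (h : Relation.ReflTransGen R w z) :
    ∃ l : List α, l ≠ [] ∧ l.head? = some w ∧ l.getLast? = some z ∧ l.Chain' R := by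
  induction h with
  | refl => exact ⟨[w], by simp, by simp, by simp, List.isChain_singleton w⟩
  | @tail b c hab hbc ih =>
    obtain ⟨l, hne, hh, hl, hc⟩ := ih
    refine ⟨l ++ [c], by simp, ?_, ?_, ?_⟩
    · rw [List.head?_append_of_ne_nil _ hne, hh]
    · rw [List.getLast?_append_of_ne_nil _ (by simp)]
      simp
    · refine List.isChain_append.mpr ⟨hc, List.isChain_singleton c, ?_⟩
      intro x hx y hy
      simp only [List.head?_cons, Option.mem_def, Option.some.injEq] at hy
      rw [hl] at hx
      simp only [Option.mem_def, Option.some.injEq] at hx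
      subst hx; subst hy
      exact hbc

end AuxLemmas

/-- The linear equation system recovering the `v`-th column of `Λ`: with
`A i j = [(I-Λ)ᵀ Σ]_{y i, p j}` if `y i ∈ htr(v)` and `A i j = Σ_{y i, p j}` otherwise, and
`b i = [(I-Λ)ᵀ Σ]_{y i, v}` if `y i ∈ htr(v)` and `b i = Σ_{y i, v}` otherwise, one has
`A ⬝ Λ_{pa(v), v} = b`. -/
theorem linear_system_for_column {V : Type*} [Fintype V] [DecidableEq V]
    (G : MixedGraph V) (θ : Matrix V V ℝ × Matrix V V ℝ) (hθ : θ ∈ G.Theta)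
    (v : V) (n : ℕ) (y p : Fin n → V)
    (hy : Function.Injective y) (hp : Function.Injective p)
    (hpa : Finset.univ.image p = G.pa v)
    (hYv : ∀ i, y i ≠ v ∧ y i ∉ G.sib v) :
    ∀ i : Fin n,
      (∑ j : Fin n,
        (if y i ∈ G.htr v then
            (((1 - θ.1)ᵀ * MixedGraph.phi θ.1 θ.2 : Matrix V V ℝ)) (y i) (p j)
          else
            MixedGraph.phi θ.1 θ.2 (y i) (p j)) * θ.1 (p j) v) =
      (if y i ∈ G.htr v then
          (((1 - θ.1)ᵀ * MixedGraph.phi θ.1 θ.2 : Matrix V V ℝ)) (y i) v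
        else
          MixedGraph.phi θ.1 θ.2 (y i) v) := by
  obtain ⟨⟨hΛsupp, hdet⟩, hΩpd, hΩsupp⟩ := hθ
  intro i
  have hΩyv : θ.2 (y i) v = 0 := by
    refine hΩsupp (y i) v (hYv i).1 (fun hB => (hYv i).2 ?_)
    simpa [MixedGraph.sib] using hB
  have hsum : ∀ X : Matrix V V ℝ,
      (∑ j : Fin n, X (y i) (p j) * θ.1 (p j) v) = (X * θ.1) (y i) v := by
    intro X
    rw [Matrix.mul_apply]
    have himg : ∑ w ∈ Finset.univ.image p, X (y i) w * θ.1 w v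
        = ∑ j : Fin n, X (y i) (p j) * θ.1 (p j) v :=
      Finset.sum_image (fun a _ b _ h => hp h)
    rw [← himg]
    refine Finset.sum_subset (Finset.subset_univ _) ?_
    intro w _ hw
    rw [hpa] at hw
    have hD : (w, v) ∉ G.D := by simpa [MixedGraph.pa] using hw
    rw [hΛsupp w v hD, mul_zero]
  by_cases hhtr : y i ∈ G.htr v
  · simp only [if_pos hhtr]
    rw [hsum]
    have h1 : (1 - θ.1)ᵀ * ((1 - θ.1)⁻¹)ᵀ = 1 := by
      rw [← Matrix.transpose_mul, Matrix.nonsing_inv_mul _ hdet, Matrix.transpose_one]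
    have hM : (1 - θ.1)ᵀ * MixedGraph.phi θ.1 θ.2 = θ.2 * (1 - θ.1)⁻¹ := by
      rw [MixedGraph.phi, ← Matrix.mul_assoc, ← Matrix.mul_assoc, h1, Matrix.one_mul]
    have h3 : θ.2 * (1 - θ.1)⁻¹ * (1 - θ.1) = θ.2 := by
      rw [Matrix.mul_assoc, Matrix.nonsing_inv_mul _ hdet, Matrix.mul_one]
    have h2 : θ.2 * (1 - θ.1)⁻¹ * θ.1 = θ.2 * (1 - θ.1)⁻¹ - θ.2 := by
      rw [mul_sub, mul_one] at h3
      have h4 := congrArg (fun Z => θ.2 * (1 - θ.1)⁻¹ - Z) h3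
      simpa [sub_sub_cancel] using h4
    rw [hM, h2, Matrix.sub_apply, hΩyv, sub_zero]
  · simp only [if_neg hhtr]
    rw [hsum]
    have h3 : MixedGraph.phi θ.1 θ.2 * (1 - θ.1) = ((1 - θ.1)⁻¹)ᵀ * θ.2 := by
      rw [MixedGraph.phi, Matrix.mul_assoc, Matrix.nonsing_inv_mul _ hdet, Matrix.mul_one]
    have h2 : MixedGraph.phi θ.1 θ.2 * θ.1
        = MixedGraph.phi θ.1 θ.2 - ((1 - θ.1)⁻¹)ᵀ * θ.2 := by
      rw [mul_sub, mul_one] at h3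
      have h4 := congrArg (fun Z => MixedGraph.phi θ.1 θ.2 - Z) h3
      simpa [sub_sub_cancel] using h4
    have hzero : ((((1 - θ.1)⁻¹)ᵀ * θ.2 : Matrix V V ℝ)) (y i) v = 0 := by
      rw [Matrix.mul_apply]
      refine Finset.sum_eq_zero fun w _ => ?_
      rw [Matrix.transpose_apply]
      by_cases hΩw : θ.2 w v = 0
      · rw [hΩw, mul_zero]
      · have hwv : w = v ∨ (w, v) ∈ G.B := by
          by_contra hcon
          push_neg at hcon
          exact hΩw (hΩsupp w v hcon.1 hcon.2)
        have hinv0 : (1 - θ.1)⁻¹ w (y i) = 0 := by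
          set S : V → V → Prop := Relation.ReflTransGen (fun a b => (a, b) ∈ G.D) with hS
          have hrefl : ∀ a, S a a := fun a => Relation.ReflTransGen.refl
          have htrans : ∀ a b c, S a b → S b c → S a c :=
            fun a b c h1 h2 => h1.trans h2
          have hmem : (1 - θ.1) ∈ suppAlg S hrefl htrans := by
            intro a b hab
            have hne : a ≠ b := by rintro rfl; exact hab (hrefl a)
            have hD : (a, b) ∉ G.D := fun hD => hab (Relation.ReflTransGen.single hD)
            simp [Matrix.sub_apply, Matrix.one_apply, hne, hΛsupp a b hD]
          refine inv_mem_of_mem_subalgebra hmem hdet w (y i) ?_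
          intro hreach
          by_cases hwy : w = y i
          · subst hwy
            rcases hwv with rfl | hB
            · exact (hYv i).1 rfl
            · exact (hYv i).2 (by simpa [MixedGraph.sib] using hB)
          · obtain ⟨l, hne, hh, hl, hc⟩ := chain_of_rtg hreach
            have hhead : l.head hne = w := by
              have := (List.head?_eq_head hne).symm.trans hh
              exact Option.some.inj this
            have hlast : l.getLast hne = y i := by
              have := (List.getLast?_eq_getLast_of_ne_nil hne).symm.trans hl
              exact Option.some.inj this
            have hl2 : 2 ≤ l.length := by
              rcases l with _ | ⟨a, _ | ⟨b, t⟩⟩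
              · exact absurd rfl hne
              · exfalso
                simp only [List.head?_cons, Option.some.injEq] at hh
                simp only [List.getLast?_singleton, Option.some.injEq] at hl
                exact hwy (hh ▸ hl)
              · simp only [List.length_cons]; omega
            apply hhtr
            refine ⟨(hYv i).1, (hYv i).2, ?_⟩
            rcases hwv with rfl | hB
            · refine ⟨⟨[w], l, by simp, hne, false, List.isChain_singleton w, hc, ?_⟩,
                ?_, ?_, ?_, ?_⟩
              · simpa using hhead.symm
              · simp [MixedGraph.Trek.source]
              · simpa [MixedGraph.Trek.target] using hlast
              · simp [MixedGraph.Trek.IsHalfTrek, MixedGraph.Trek.leftSet]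
              · simp only [MixedGraph.Trek.nEdges, List.length_singleton]
                omega
            · refine ⟨⟨[v], l, by simp, hne, true, List.isChain_singleton v, hc, ?_⟩,
                ?_, ?_, ?_, ?_⟩
              · simpa [hhead] using G.B_symm w v hB
              · simp [MixedGraph.Trek.source]
              · simpa [MixedGraph.Trek.target] using hlast
              · simp [MixedGraph.Trek.IsHalfTrek, MixedGraph.Trek.leftSet]
              · simp only [MixedGraph.Trek.nEdges, List.length_singleton]
                omega
        rw [hinv0, zero_mul]
    rw [h2, Matrix.sub_apply, hzero, sub_zero]
end
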